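/- arXiv:1403.5031 — 7 statements merged into one kernel-verified Lean document; each statement's English description precedes it below -/
import Mathlib

section
/- For p, q ∈ [1,∞] with 1/p + 1/q = 1, and for any complex n×n matrix A and vectors x, y ∈ ℂⁿ, one has ‖diag(x)·A·y‖_p ≤ (max over rows h of ‖A_{h•}‖_q) · ‖x‖_p · ‖y‖_p. -/
open scoped ENNReal ComplexConjugate

theorem pilp_scale_aux {n : ℕ} (p : ℝ≥0∞) [Fact (1 ≤ p)] (f g : Fin n → ℂ) (C : ℝ) (hC : 0 ≤ C)
    (h : ∀ i, ‖f i‖ ≤ C * ‖g i‖) :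
    ‖(WithLp.equiv p (Fin n → ℂ)).symm f‖ ≤ C * ‖(WithLp.equiv p (Fin n → ℂ)).symm g‖ := by
  rcases eq_or_ne p ⊤ with rfl | hp
  · rw [PiLp.norm_eq_ciSup, PiLp.norm_eq_ciSup]
    refine Real.iSup_le (fun i => (h i).trans ?_)
      (mul_nonneg hC (Real.iSup_nonneg fun i => norm_nonneg _))
    gcongr
    exact le_ciSup (f := fun i => ‖(WithLp.equiv ⊤ (Fin n → ℂ)).symm g i‖)
      (Set.Finite.bddAbove (Set.finite_range _)) i
  · have hpt : 0 < p.toReal := ENNReal.toReal_pos (by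
      have : (1:ℝ≥0∞) ≤ p := Fact.out
      exact fun h0 => by simp [h0] at this) hp
    rw [PiLp.norm_eq_sum hpt, PiLp.norm_eq_sum hpt]
    have key : ∑ i, ‖f i‖ ^ p.toReal ≤ C ^ p.toReal * ∑ i, ‖g i‖ ^ p.toReal := by
      rw [Finset.mul_sum]
      refine Finset.sum_le_sum fun i _ => ?_
      calc ‖f i‖ ^ p.toReal ≤ (C * ‖g i‖) ^ p.toReal :=
            Real.rpow_le_rpow (norm_nonneg _) (h i) hpt.le
        _ = C ^ p.toReal * ‖g i‖ ^ p.toReal := Real.mul_rpow hC (norm_nonneg _)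
    calc (∑ i, ‖f i‖ ^ p.toReal) ^ (1 / p.toReal)
        ≤ (C ^ p.toReal * ∑ i, ‖g i‖ ^ p.toReal) ^ (1 / p.toReal) :=
          Real.rpow_le_rpow (by positivity) key (by positivity)
      _ = C * (∑ i, ‖g i‖ ^ p.toReal) ^ (1 / p.toReal) := by
          rw [Real.mul_rpow (by positivity) (by positivity),
            ← Real.rpow_mul hC, mul_one_div, div_self hpt.ne', Real.rpow_one]

theorem pilp_holder_aux {n : ℕ} (p q : ℝ≥0∞) [Fact (1 ≤ p)] [Fact (1 ≤ q)]
    (hpq : 1 / p + 1 / q = 1) (a y : Fin n → ℂ) :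
    ‖∑ k, a k * y k‖ ≤
      ‖(WithLp.equiv q (Fin n → ℂ)).symm a‖ * ‖(WithLp.equiv p (Fin n → ℂ)).symm y‖ := by
  have hp1 : (1:ℝ≥0∞) ≤ p := Fact.out
  have hq1 : (1:ℝ≥0∞) ≤ q := Fact.out
  have hp0 : p ≠ 0 := fun h0 => by simp [h0] at hp1
  have hq0 : q ≠ 0 := fun h0 => by simp [h0] at hq1
  have step1 : ‖∑ k, a k * y k‖ ≤ ∑ k, ‖a k‖ * ‖y k‖ := by
    refine (norm_sum_le _ _).trans (le_of_eq ?_)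
    simp [norm_mul]
  refine step1.trans ?_
  rcases eq_or_ne q ⊤ with rfl | hqt
  · have hp : p = 1 := by
      rw [one_div, one_div] at hpq
      simpa using hpq
    subst hp
    rw [PiLp.norm_eq_ciSup, PiLp.norm_eq_sum (by norm_num)]
    simp only [ENNReal.toReal_one, Real.rpow_one, one_div_one]
    rw [Finset.mul_sum]
    refine Finset.sum_le_sum fun k _ => ?_
    exact mul_le_mul_of_nonneg_right
      (le_ciSup (f := fun k => ‖(WithLp.equiv ⊤ (Fin n → ℂ)).symm a k‖)
        (Set.Finite.bddAbove (Set.finite_range _)) k) (norm_nonneg _)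
  rcases eq_or_ne p ⊤ with rfl | hpt
  · have hq : q = 1 := by
      rw [one_div, one_div] at hpq
      simpa using hpq
    subst hq
    rw [PiLp.norm_eq_ciSup, PiLp.norm_eq_sum (by norm_num)]
    simp only [ENNReal.toReal_one, Real.rpow_one, one_div_one]
    rw [Finset.sum_mul]
    refine Finset.sum_le_sum fun k _ => ?_
    exact mul_le_mul_of_nonneg_left
      (le_ciSup (f := fun k => ‖(WithLp.equiv ⊤ (Fin n → ℂ)).symm y k‖)
        (Set.Finite.bddAbove (Set.finite_range _)) k) (norm_nonneg _)
  · have hqgt : 1 < q := by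
      rcases lt_or_eq_of_le hq1 with h | h
      · exact h
      · exfalso
        have h2 : 1 / p + 1 = 1 := by rw [← h] at hpq; simpa using hpq
        have h3 : 1 / p = 0 := by
          exact WithTop.add_right_cancel (by simp : (1:ℝ≥0∞) ≠ ⊤)
            (h2.trans (zero_add 1).symm)
        rw [one_div, ENNReal.inv_eq_zero] at h3
        exact hpt h3
    have hcr : q.toReal.HolderConjugate p.toReal := by
      rw [one_div, one_div] at hpq
      have h' := congrArg ENNReal.toReal hpq
      rw [ENNReal.toReal_add (by simp [hp0]) (by simp [hq0]),
        ENNReal.toReal_inv, ENNReal.toReal_inv, ENNReal.toReal_one] at h'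
      rw [Real.holderConjugate_iff]
      constructor
      · rw [← ENNReal.toReal_one]
        exact (ENNReal.toReal_lt_toReal (by simp) hqt).mpr hqgt
      · linarith
    have hH := Real.inner_le_Lp_mul_Lq Finset.univ (fun k => ‖a k‖) (fun k => ‖y k‖) hcr
    simp only [abs_norm] at hH
    rw [PiLp.norm_eq_sum (ENNReal.toReal_pos hq0 hqt),
      PiLp.norm_eq_sum (ENNReal.toReal_pos hp0 hpt)]
    exact hH

/-- Lemma 1, one direction: for conjugate exponents `p, q ∈ [1,∞]`,
`‖diag(x)·A·y‖_p ≤ (max_h ‖A_{h•}‖_q) ‖x‖_p ‖y‖_p`. -/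
theorem stmt_2 {n : ℕ} (p q : ℝ≥0∞) [Fact (1 ≤ p)] [Fact (1 ≤ q)]
    (hpq : 1 / p + 1 / q = 1)
    (A : Matrix (Fin n) (Fin n) ℂ) (x y : Fin n → ℂ) :
    ‖(WithLp.equiv p (Fin n → ℂ)).symm (fun h => x h * ∑ k, A h k * y k)‖ ≤
      (⨆ h, ‖(WithLp.equiv q (Fin n → ℂ)).symm (A h)‖) *
        ‖(WithLp.equiv p (Fin n → ℂ)).symm x‖ *
        ‖(WithLp.equiv p (Fin n → ℂ)).symm y‖ := by
  set M : ℝ := ⨆ h, ‖(WithLp.equiv q (Fin n → ℂ)).symm (A h)‖ with hM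
  have hM0 : 0 ≤ M := Real.iSup_nonneg fun h => norm_nonneg _
  set Y : ℝ := ‖(WithLp.equiv p (Fin n → ℂ)).symm y‖ with hY
  have hbound : ∀ h, ‖x h * ∑ k, A h k * y k‖ ≤ (M * Y) * ‖x h‖ := by
    intro h
    rw [norm_mul, mul_comm (M * Y) _]
    refine mul_le_mul_of_nonneg_left ?_ (norm_nonneg _)
    calc ‖∑ k, A h k * y k‖
        ≤ ‖(WithLp.equiv q (Fin n → ℂ)).symm (A h)‖ * Y := pilp_holder_aux p q hpq (A h) y
      _ ≤ M * Y := by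
          refine mul_le_mul_of_nonneg_right ?_ (norm_nonneg _)
          exact le_ciSup (f := fun h => ‖(WithLp.equiv q (Fin n → ℂ)).symm (A h)‖)
            (Set.Finite.bddAbove (Set.finite_range _)) h
  calc ‖(WithLp.equiv p (Fin n → ℂ)).symm (fun h => x h * ∑ k, A h k * y k)‖
    ≤ (M * Y) * ‖(WithLp.equiv p (Fin n → ℂ)).symm x‖ :=
      pilp_scale_aux p _ x (M * Y) (mul_nonneg hM0 (norm_nonneg _)) hbound
  _ = M * ‖(WithLp.equiv p (Fin n → ℂ)).symm x‖ * Y := by ring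
end

section
/- For p, q ∈ [1,∞] with 1/p + 1/q = 1 and any complex n×n matrix A, the value max over unit vectors x, y (in p-norm) of ‖diag(x)·A·y‖_p equals max_h ‖A_{h•}‖_q; in particular there exist unit vectors x, y with ‖diag(x)·A·y‖_p = max_h ‖A_{h•}‖_q. -/
open scoped ENNReal
open Finset

section stmt5helpers

variable {n : ℕ}

/-- Trichotomy for conjugate ENNReal exponents. -/
lemma stmt5_cases {p q : ℝ≥0∞} (hp : 1 ≤ p) (hq : 1 ≤ q) (hpq : 1 / p + 1 / q = 1) :
    (p = 1 ∧ q = ∞) ∨ (p = ∞ ∧ q = 1) ∨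
      (p ≠ ∞ ∧ q ≠ ∞ ∧ p.toReal.HolderConjugate q.toReal) := by
  rw [one_div, one_div] at hpq
  have hp0 : p ≠ 0 := (zero_lt_one.trans_le hp).ne'
  have hq0 : q ≠ 0 := (zero_lt_one.trans_le hq).ne'
  rcases eq_or_lt_of_le hp with h1 | h1
  · left
    refine ⟨h1.symm, ?_⟩
    rw [← h1, inv_one] at hpq
    have : q⁻¹ = 0 := by
      by_contra h
      have : 1 < 1 + q⁻¹ := ENNReal.lt_add_right ENNReal.one_ne_top h
      rw [hpq] at this
      exact lt_irrefl _ this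
    simpa [ENNReal.inv_eq_zero] using this
  rcases eq_or_ne p ∞ with h2 | h2
  · right; left
    refine ⟨h2, ?_⟩
    rw [h2, ENNReal.inv_top, zero_add] at hpq
    rw [← inv_inv q, hpq, inv_one]
  · right; right
    have hq2 : q ≠ ∞ := by
      intro h3
      rw [h3, ENNReal.inv_top, add_zero] at hpq
      rw [← inv_inv p, hpq, inv_one] at h1
      exact lt_irrefl _ h1
    refine ⟨h2, hq2, Real.holderConjugate_iff.mpr ⟨?_, ?_⟩⟩
    · have := ENNReal.toReal_lt_toReal (by simp) h2 |>.mpr h1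
      simpa using this
    · have hsum : (p⁻¹ + q⁻¹).toReal = 1 := by rw [hpq]; simp
      rw [ENNReal.toReal_add (by simp [hp0]) (by simp [hq0])] at hsum
      rw [ENNReal.toReal_inv, ENNReal.toReal_inv] at hsum
      simpa [one_div] using hsum

lemma stmt5_norm_eq_sum (p : ℝ≥0∞) [Fact (1 ≤ p)] (hp : p ≠ ∞) (x : Fin n → ℂ) :
    ‖(WithLp.equiv p (Fin n → ℂ)).symm x‖ = (∑ k, ‖x k‖ ^ p.toReal) ^ (1 / p.toReal) := by
  have h0 : 0 < p.toReal :=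
    ENNReal.toReal_pos (zero_lt_one.trans_le (Fact.out : 1 ≤ p)).ne' hp
  rw [PiLp.norm_eq_sum h0]
  rfl

lemma stmt5_norm_eq_sup (x : Fin n → ℂ) :
    ‖(WithLp.equiv ∞ (Fin n → ℂ)).symm x‖ = ⨆ k, ‖x k‖ := by
  rw [PiLp.norm_eq_ciSup]
  rfl

end stmt5helpers

section stmt5more
variable {n : ℕ}

lemma stmt5_pointwise_le (p : ℝ≥0∞) [Fact (1 ≤ p)] (f g : Fin n → ℂ)
    (h : ∀ i, ‖f i‖ ≤ ‖g i‖) :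
    ‖(WithLp.equiv p (Fin n → ℂ)).symm f‖ ≤ ‖(WithLp.equiv p (Fin n → ℂ)).symm g‖ := by
  rcases eq_or_ne p ∞ with rfl | hp
  · rw [stmt5_norm_eq_sup, stmt5_norm_eq_sup]
    rcases Nat.eq_zero_or_pos n with rfl | hn
    · simp
    exact ciSup_mono (Set.Finite.bddAbove (Set.finite_range _)) h
  · rw [stmt5_norm_eq_sum p hp, stmt5_norm_eq_sum p hp]
    have h0 : 0 < p.toReal :=
      ENNReal.toReal_pos (zero_lt_one.trans_le (Fact.out : 1 ≤ p)).ne' hp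
    apply Real.rpow_le_rpow
    · exact Finset.sum_nonneg fun k _ => Real.rpow_nonneg (norm_nonneg _) _
    · exact Finset.sum_le_sum fun k _ => Real.rpow_le_rpow (norm_nonneg _) (h k) h0.le
    · positivity

lemma stmt5_scale (p : ℝ≥0∞) [Fact (1 ≤ p)] (x s : Fin n → ℂ) (C : ℝ) (hC : 0 ≤ C)
    (hs : ∀ h, ‖s h‖ ≤ C) (hx : ‖(WithLp.equiv p (Fin n → ℂ)).symm x‖ = 1) :
    ‖(WithLp.equiv p (Fin n → ℂ)).symm (fun h => x h * s h)‖ ≤ C := by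
  have key : ‖(WithLp.equiv p (Fin n → ℂ)).symm (fun h => x h * s h)‖ ≤
      ‖(WithLp.equiv p (Fin n → ℂ)).symm ((C : ℂ) • x)‖ := by
    apply stmt5_pointwise_le
    intro i
    simp only [Pi.smul_apply, smul_eq_mul, norm_mul]
    calc ‖x i‖ * ‖s i‖ ≤ ‖x i‖ * C := by
          exact mul_le_mul_of_nonneg_left (hs i) (norm_nonneg _)
      _ = ‖(C : ℂ)‖ * ‖x i‖ := by
          rw [Complex.norm_real, Real.norm_of_nonneg hC]; ring
  calc _ ≤ _ := key
    _ = C := by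
        rw [WithLp.equiv_symm_apply, WithLp.toLp_smul, norm_smul, ← WithLp.equiv_symm_apply, hx, Complex.norm_real, Real.norm_of_nonneg hC, mul_one]

end stmt5more

section stmt5holder
variable {n : ℕ}

lemma stmt5_holder (p q : ℝ≥0∞) [Fact (1 ≤ p)] [Fact (1 ≤ q)]
    (hpq : 1 / p + 1 / q = 1) (u v : Fin n → ℂ) :
    ‖∑ k, u k * v k‖ ≤
      ‖(WithLp.equiv q (Fin n → ℂ)).symm u‖ * ‖(WithLp.equiv p (Fin n → ℂ)).symm v‖ := by
  have step : ‖∑ k, u k * v k‖ ≤ ∑ k, ‖u k‖ * ‖v k‖ := by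
    refine (norm_sum_le _ _).trans ?_
    exact Finset.sum_le_sum fun k _ => (norm_mul_le _ _)
  refine step.trans ?_
  rcases stmt5_cases (Fact.out : 1 ≤ p) (Fact.out : 1 ≤ q) hpq with ⟨hp, hq⟩ | ⟨hp, hq⟩ | ⟨hp, hq, hc⟩
  · -- p = 1, q = ∞
    subst hp hq
    rw [stmt5_norm_eq_sup, stmt5_norm_eq_sum 1 (by simp)]
    simp only [ENNReal.toReal_one, Real.rpow_one, ne_eq, one_ne_zero, not_false_eq_true,
      div_self, Finset.mul_sum]
    refine Finset.sum_le_sum fun k _ => ?_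
    exact mul_le_mul_of_nonneg_right
      (le_ciSup (f := fun k => ‖u k‖) (Set.Finite.bddAbove (Set.finite_range _)) k) (norm_nonneg _)
  · -- p = ∞, q = 1
    subst hp hq
    rw [stmt5_norm_eq_sup, stmt5_norm_eq_sum 1 (by simp)]
    simp only [ENNReal.toReal_one, Real.rpow_one, ne_eq, one_ne_zero, not_false_eq_true,
      div_self, Finset.sum_mul]
    refine Finset.sum_le_sum fun k _ => ?_
    exact mul_le_mul_of_nonneg_left
      (le_ciSup (f := fun k => ‖v k‖) (Set.Finite.bddAbove (Set.finite_range _)) k) (norm_nonneg _)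
  · rw [stmt5_norm_eq_sum q hq, stmt5_norm_eq_sum p hp]
    exact Real.inner_le_Lp_mul_Lq_of_nonneg Finset.univ hc.symm
      (fun i _ => norm_nonneg _) (fun i _ => norm_nonneg _)

end stmt5holder

section stmt5attain
variable {n : ℕ}

noncomputable def stmt5_sgn (z : ℂ) : ℂ := if z = 0 then 0 else (starRingEnd ℂ) z / (‖z‖ : ℂ)

lemma stmt5_mul_sgn (z : ℂ) : z * stmt5_sgn z = (‖z‖ : ℂ) := by
  unfold stmt5_sgn
  by_cases hz : z = 0
  · simp [hz]
  · rw [if_neg hz, mul_div_assoc', Complex.mul_conj, Complex.normSq_eq_norm_sq,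
      div_eq_iff (by simpa using norm_ne_zero_iff.mpr hz)]
    norm_cast
    ring

lemma stmt5_norm_sgn (z : ℂ) (hz : z ≠ 0) : ‖stmt5_sgn z‖ = 1 := by
  unfold stmt5_sgn
  rw [if_neg hz, norm_div, RCLike.norm_conj, Complex.norm_real,
    Real.norm_of_nonneg (norm_nonneg _), div_self (norm_ne_zero_iff.mpr hz)]

lemma stmt5_attain (hn : 0 < n) (p q : ℝ≥0∞) [Fact (1 ≤ p)] [Fact (1 ≤ q)]
    (hpq : 1 / p + 1 / q = 1) (a : Fin n → ℂ) :
    ∃ y : Fin n → ℂ, ‖(WithLp.equiv p (Fin n → ℂ)).symm y‖ = 1 ∧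
      ‖∑ k, a k * y k‖ = ‖(WithLp.equiv q (Fin n → ℂ)).symm a‖ := by
  haveI : Nonempty (Fin n) := Fin.pos_iff_nonempty.mp hn
  by_cases ha : a = 0
  · refine ⟨Pi.single ⟨0, hn⟩ 1, ?_, ?_⟩
    · rw [WithLp.equiv_symm_apply, PiLp.norm_toLp_single]; exact norm_one
    · subst ha; simp
  rcases stmt5_cases (Fact.out : 1 ≤ p) (Fact.out : 1 ≤ q) hpq with ⟨hp, hq⟩ | ⟨hp, hq⟩ | ⟨hp, hq, hc⟩
  · -- p = 1, q = ∞
    subst hp hq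
    obtain ⟨k₀, hk₀⟩ := Finite.exists_max (fun k => ‖a k‖)
    have hk0 : a k₀ ≠ 0 := by
      intro h0
      apply ha
      funext k
      have := hk₀ k
      rw [h0, norm_zero] at this
      exact norm_le_zero_iff.mp this
    refine ⟨Pi.single k₀ (stmt5_sgn (a k₀)), ?_, ?_⟩
    · rw [WithLp.equiv_symm_apply, PiLp.norm_toLp_single]; exact stmt5_norm_sgn _ hk0
    · have hsum : ∑ k, a k * (Pi.single k₀ (stmt5_sgn (a k₀)) : Fin n → ℂ) k = a k₀ * stmt5_sgn (a k₀) := by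
        refine (Finset.sum_eq_single k₀ (fun k _ hk => ?_) (fun h => absurd (Finset.mem_univ k₀) h)).trans ?_
        · rw [Pi.single_eq_of_ne hk, mul_zero]
        · rw [Pi.single_eq_same]
      rw [hsum, stmt5_mul_sgn, Complex.norm_real, Real.norm_of_nonneg (norm_nonneg _),
        stmt5_norm_eq_sup]
      exact le_antisymm (le_ciSup (f := fun k => ‖a k‖)
        (Set.Finite.bddAbove (Set.finite_range _)) k₀) (ciSup_le hk₀)
  · -- p = ∞, q = 1
    subst hp hq
    set y : Fin n → ℂ := fun k => if a k = 0 then 1 else stmt5_sgn (a k) with hy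
    have h1 : ∀ k, ‖y k‖ = 1 := by
      intro k
      by_cases h : a k = 0
      · simp [hy, h]
      · rw [hy]; simp only [if_neg h]; exact stmt5_norm_sgn _ h
    refine ⟨y, ?_, ?_⟩
    · rw [stmt5_norm_eq_sup]
      exact le_antisymm (ciSup_le fun k => le_of_eq (h1 k))
        (le_ciSup_of_le (Set.Finite.bddAbove (Set.finite_range _))
          (Classical.arbitrary _) (h1 _).ge)
    · have hterm : ∀ k, a k * y k = (‖a k‖ : ℂ) := by
        intro k
        by_cases h : a k = 0
        · simp [hy, h]
        · rw [hy]; simp only [if_neg h]; exact stmt5_mul_sgn _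
      simp_rw [hterm]
      rw [← Complex.ofReal_sum, Complex.norm_real,
        Real.norm_of_nonneg (Finset.sum_nonneg fun k _ => norm_nonneg _),
        stmt5_norm_eq_sum 1 (by simp)]
      simp
  · -- both finite
    have hc' := hc.symm
    set t := q.toReal with ht
    set s := p.toReal with hs
    have hts : (t - 1) * s = t := hc'.sub_one_mul_conj
    have ht1 : 1 < t := hc'.lt
    have ht0 : t ≠ 0 := hc'.ne_zero
    have ht10 : t - 1 ≠ 0 := by linarith
    have hs0 : s ≠ 0 := hc.ne_zero
    have hsumpos : 0 < ∑ k, ‖a k‖ ^ t := by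
      obtain ⟨k, hk⟩ : ∃ k, a k ≠ 0 := by
        by_contra h
        push_neg at h
        exact ha (funext fun k => h k)
      refine Finset.sum_pos' (fun k _ => Real.rpow_nonneg (norm_nonneg _) _)
        ⟨k, Finset.mem_univ k, Real.rpow_pos_of_pos (norm_pos_iff.mpr hk) t⟩
    set N := (∑ k, ‖a k‖ ^ t) ^ (1/t) with hNdef
    have hN : 0 < N := Real.rpow_pos_of_pos hsumpos _
    have hNt : N ^ t = ∑ k, ‖a k‖ ^ t := by
      rw [hNdef, ← Real.rpow_mul hsumpos.le, one_div, inv_mul_cancel₀ ht0, Real.rpow_one]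
    set y : Fin n → ℂ := fun k => stmt5_sgn (a k) * ((‖a k‖ ^ (t-1) / N ^ (t-1) : ℝ) : ℂ) with hy
    have hynorm : ∀ k, ‖y k‖ = ‖a k‖ ^ (t-1) / N ^ (t-1) := by
      intro k
      by_cases h : a k = 0
      · have hy0 : y k = 0 := by simp [hy, stmt5_sgn, h]
        rw [hy0, norm_zero, h, norm_zero, Real.zero_rpow ht10, zero_div]
      · rw [hy]
        simp only
        rw [norm_mul, stmt5_norm_sgn _ h, one_mul, Complex.norm_real,
          Real.norm_of_nonneg (div_nonneg (Real.rpow_nonneg (norm_nonneg _) _)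
            (Real.rpow_nonneg hN.le _))]
    refine ⟨y, ?_, ?_⟩
    · rw [stmt5_norm_eq_sum p hp, ← hs]
      have hpow : ∀ k, ‖y k‖ ^ s = ‖a k‖ ^ t / N ^ t := by
        intro k
        rw [hynorm k, Real.div_rpow (Real.rpow_nonneg (norm_nonneg _) _)
          (Real.rpow_nonneg hN.le _), ← Real.rpow_mul (norm_nonneg _),
          ← Real.rpow_mul hN.le, hts]
      simp_rw [hpow]
      rw [← Finset.sum_div, ← hNt, div_self (by positivity), Real.one_rpow]
    · have hterm : ∀ k, a k * y k = ((‖a k‖ ^ t / N ^ (t-1) : ℝ) : ℂ) := by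
        intro k
        rw [hy]
        simp only
        rw [← mul_assoc, stmt5_mul_sgn]
        by_cases h : a k = 0
        · rw [h, norm_zero, Real.zero_rpow ht10, Real.zero_rpow ht0]
          simp
        · rw [← Complex.ofReal_mul]
          congr 1
          rw [mul_div_assoc']
          congr 1
          rw [show t = 1 + (t-1) by ring, Real.rpow_add (norm_pos_iff.mpr h), Real.rpow_one]
          ring_nf
      simp_rw [hterm]
      rw [← Complex.ofReal_sum, Complex.norm_real,
        Real.norm_of_nonneg (Finset.sum_nonneg fun k _ =>
          div_nonneg (Real.rpow_nonneg (norm_nonneg _) _) (Real.rpow_nonneg hN.le _)),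
        ← Finset.sum_div, ← hNt, ← Real.rpow_sub hN, show t - (t-1) = 1 by ring,
        Real.rpow_one, stmt5_norm_eq_sum q hq]

end stmt5attain

/-- Lemma 1 (full statement): for conjugate exponents `p, q ∈ [1,∞]`, the maximum of
`‖diag(x)·A·y‖_p` over unit vectors `x, y` is exactly `max_h ‖A_{h•}‖_q`, and it is attained. -/
theorem stmt_5 {n : ℕ} (hn : 0 < n) (p q : ℝ≥0∞) [Fact (1 ≤ p)] [Fact (1 ≤ q)]
    (hpq : 1 / p + 1 / q = 1) (A : Matrix (Fin n) (Fin n) ℂ) :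
    IsGreatest
      {r : ℝ | ∃ x y : Fin n → ℂ,
        ‖(WithLp.equiv p (Fin n → ℂ)).symm x‖ = 1 ∧
        ‖(WithLp.equiv p (Fin n → ℂ)).symm y‖ = 1 ∧
        r = ‖(WithLp.equiv p (Fin n → ℂ)).symm (fun h => x h * ∑ k, A h k * y k)‖}
      (⨆ h, ‖(WithLp.equiv q (Fin n → ℂ)).symm (A h)‖) := by
  haveI : Nonempty (Fin n) := Fin.pos_iff_nonempty.mp hn
  set g : Fin n → ℝ := fun h => ‖(WithLp.equiv q (Fin n → ℂ)).symm (A h)‖ with hg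
  obtain ⟨h₀, hmax⟩ := Finite.exists_max g
  have hsup : (⨆ h, g h) = g h₀ :=
    le_antisymm (ciSup_le hmax) (le_ciSup (Set.Finite.bddAbove (Set.finite_range g)) h₀)
  constructor
  · -- membership
    obtain ⟨y, hy1, hy2⟩ := stmt5_attain hn p q hpq (A h₀)
    refine ⟨Pi.single h₀ 1, y, ?_, hy1, ?_⟩
    · rw [WithLp.equiv_symm_apply, PiLp.norm_toLp_single]; exact norm_one
    · have hvec : (fun h => (Pi.single h₀ 1 : Fin n → ℂ) h * ∑ k, A h k * y k)
          = (Pi.single h₀ (∑ k, A h₀ k * y k) : Fin n → ℂ) := by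
        funext h
        by_cases hh : h = h₀
        · subst hh; rw [Pi.single_eq_same, Pi.single_eq_same, one_mul]
        · rw [Pi.single_eq_of_ne hh, Pi.single_eq_of_ne hh, zero_mul]
      rw [hsup, hvec, WithLp.equiv_symm_apply, PiLp.norm_toLp_single, hy2]
  · -- upper bound
    rintro r ⟨x, y, hx, hy, rfl⟩
    have hC0 : 0 ≤ ⨆ h, g h := by rw [hsup]; exact norm_nonneg _
    refine stmt5_scale p x (fun h => ∑ k, A h k * y k) _ hC0 (fun h => ?_) hx
    calc ‖∑ k, A h k * y k‖
        ≤ g h * ‖(WithLp.equiv p (Fin n → ℂ)).symm y‖ := stmt5_holder p q hpq (A h) y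
      _ = g h := by rw [hy, mul_one]
      _ ≤ ⨆ h, g h := (hmax h).trans hsup.ge
end

section
/- Let G(f) := −(1/V₀²)·diag(f+s)·Z·(conj(f)+conj(s)) with V₀ > 0, Z ∈ ℂ^{n×n}, s ∈ ℂⁿ, and suppose V₀² > 4‖Z‖*‖s‖ where ‖Z‖* := max_h ‖Z_{h•}‖₂ and ‖·‖ is the Euclidean norm. Set δ := 4‖Z‖*‖s‖²/V₀². Then G maps the closed ball B = {f : ‖f‖ ≤ δ} into itself. -/
open scoped ComplexConjugate

/-- Invariance of the ball: if `V₀² > 4‖Z‖*‖s‖` then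
`G(f) = −(1/V₀²) diag(f+s) Z (f̄+s̄)` maps the closed ball of radius
`δ = 4‖Z‖*‖s‖²/V₀²` into itself (Euclidean norm, `‖Z‖*` = max Euclidean row norm). -/
theorem stmt_8 {n : ℕ} (V₀ : ℝ) (hV : 0 < V₀)
    (Z : Matrix (Fin n) (Fin n) ℂ) (s : EuclideanSpace ℂ (Fin n))
    (Zn : ℝ) (hZn : Zn = ⨆ h, ‖(WithLp.equiv 2 (Fin n → ℂ)).symm (Z h)‖)
    (hcond : V₀ ^ 2 > 4 * Zn * ‖s‖)
    (δ : ℝ) (hδ : δ = 4 * Zn * ‖s‖ ^ 2 / V₀ ^ 2)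
    (f : EuclideanSpace ℂ (Fin n)) (hf : ‖f‖ ≤ δ) :
    ‖(WithLp.equiv 2 (Fin n → ℂ)).symm (fun h =>
        -((V₀ : ℂ) ^ 2)⁻¹ * ((f h + s h) * ∑ k, Z h k * (conj (f k) + conj (s k))))‖ ≤ δ := by
  have hZn0 : 0 ≤ Zn := by
    rw [hZn]; exact Real.iSup_nonneg fun h => norm_nonneg _
  set u : EuclideanSpace ℂ (Fin n) := f + s with hu
  have hs0 : (0:ℝ) ≤ ‖s‖ := norm_nonneg _
  have hδs : δ ≤ ‖s‖ := by
    rw [hδ, div_le_iff₀ (by positivity)]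
    nlinarith
  have hus : ‖u‖ ≤ 2 * ‖s‖ := by
    calc ‖u‖ ≤ ‖f‖ + ‖s‖ := norm_add_le _ _
      _ ≤ 2 * ‖s‖ := by linarith
  have hrow : ∀ h, ‖∑ k, Z h k * (conj (f k) + conj (s k))‖ ≤ Zn * ‖u‖ := by
    intro h
    have heq : ∑ k, Z h k * (conj (f k) + conj (s k))
        = conj (inner ℂ ((WithLp.equiv 2 (Fin n → ℂ)).symm (Z h)) u : ℂ) := by
      rw [PiLp.inner_apply]
      rw [map_sum]
      refine Finset.sum_congr rfl fun k _ => ?_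
      simp only [RCLike.inner_apply, map_mul, RingHomCompTriple.comp_apply, RingHom.id_apply,
        starRingEnd_self_apply]
      have : conj (u k) = conj (f k) + conj (s k) := map_add (starRingEnd ℂ) (f k) (s k)
      rw [this]
      exact mul_comm _ _
    rw [heq, RCLike.norm_conj]
    calc ‖(inner ℂ ((WithLp.equiv 2 (Fin n → ℂ)).symm (Z h)) u : ℂ)‖
        ≤ ‖(WithLp.equiv 2 (Fin n → ℂ)).symm (Z h)‖ * ‖u‖ := norm_inner_le_norm _ _
      _ ≤ Zn * ‖u‖ := by
        apply mul_le_mul_of_nonneg_right _ (norm_nonneg _)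
        rw [hZn]
        exact le_ciSup (f := fun h => ‖(WithLp.equiv 2 (Fin n → ℂ)).symm (Z h)‖) (Set.Finite.bddAbove (Set.finite_range _)) h
  set C : ℝ := (V₀ ^ 2)⁻¹ * (Zn * ‖u‖) with hC
  have hC0 : 0 ≤ C := by positivity
  have hentry : ∀ h, ‖-((V₀ : ℂ) ^ 2)⁻¹ * ((f h + s h) * ∑ k, Z h k * (conj (f k) + conj (s k)))‖
      ≤ C * ‖u h‖ := by
    intro h
    rw [norm_mul, norm_mul, norm_neg, norm_inv]
    have h1 : ‖((V₀:ℂ)^2)‖ = V₀^2 := by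
      rw [norm_pow, Complex.norm_real, Real.norm_of_nonneg hV.le]
    rw [h1]
    have h2 : (f h + s h) = u h := rfl
    rw [h2, hC]
    have := hrow h
    have hinv : (0:ℝ) ≤ (V₀^2)⁻¹ := by positivity
    calc (V₀^2)⁻¹ * (‖u h‖ * ‖∑ k, Z h k * (conj (f k) + conj (s k))‖)
        ≤ (V₀^2)⁻¹ * (‖u h‖ * (Zn * ‖u‖)) := by
          apply mul_le_mul_of_nonneg_left _ hinv
          exact mul_le_mul_of_nonneg_left this (norm_nonneg _)
      _ = (V₀^2)⁻¹ * (Zn * ‖u‖) * ‖u h‖ := by ring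
  have hnorm : ‖(WithLp.equiv 2 (Fin n → ℂ)).symm (fun h =>
        -((V₀ : ℂ) ^ 2)⁻¹ * ((f h + s h) * ∑ k, Z h k * (conj (f k) + conj (s k))))‖
      ≤ C * ‖u‖ := by
    rw [EuclideanSpace.norm_eq, EuclideanSpace.norm_eq]
    rw [← Real.sqrt_sq hC0, ← Real.sqrt_mul (sq_nonneg C)]
    apply Real.sqrt_le_sqrt
    rw [Finset.mul_sum]
    apply Finset.sum_le_sum
    intro h _
    have := hentry h
    have h3 : ((WithLp.equiv 2 (Fin n → ℂ)).symm (fun h =>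
        -((V₀ : ℂ) ^ 2)⁻¹ * ((f h + s h) * ∑ k, Z h k * (conj (f k) + conj (s k))))) h
        = -((V₀ : ℂ) ^ 2)⁻¹ * ((f h + s h) * ∑ k, Z h k * (conj (f k) + conj (s k))) := rfl
    rw [h3]
    calc ‖-((V₀ : ℂ) ^ 2)⁻¹ * ((f h + s h) * ∑ k, Z h k * (conj (f k) + conj (s k)))‖^2
        ≤ (C * ‖u h‖)^2 := by
          apply pow_le_pow_left₀ (norm_nonneg _) this
      _ = C^2 * ‖u h‖^2 := by ring
  refine hnorm.trans ?_
  have hV2 : (0:ℝ) < V₀^2 := by positivity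
  have : C * ‖u‖ = Zn * ‖u‖^2 / V₀^2 := by rw [hC]; field_simp
  rw [this, hδ, div_le_div_iff₀ hV2 hV2]
  have hu0 : (0:ℝ) ≤ ‖u‖ := norm_nonneg _
  have h4 : ‖u‖^2 ≤ 4*‖s‖^2 := by nlinarith
  nlinarith [mul_le_mul_of_nonneg_left h4 (mul_nonneg hZn0 hV2.le)]
end

section
/- Let G(f) := −(1/V₀²)·diag(f+s)·Z·(conj(f)+conj(s)) with V₀ > 0 and V₀² > 4‖Z‖*‖s‖, where ‖Z‖* = max_h ‖Z_{h•}‖₂. Set δ := 4‖Z‖*‖s‖²/V₀². Then G is a contraction on the ball {f : ‖f‖ ≤ δ} with Lipschitz constant k = (2‖Z‖*/V₀²)(δ + ‖s‖) < 1. -/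
open scoped ComplexConjugate

lemma key_bound {n : ℕ} (Zn : ℝ) (hZn0 : 0 ≤ Zn) (Z : Matrix (Fin n) (Fin n) ℂ)
    (hZ : ∀ h, ‖(WithLp.equiv 2 (Fin n → ℂ)).symm (Z h)‖ ≤ Zn)
    (x y : EuclideanSpace ℂ (Fin n)) :
    ‖(WithLp.equiv 2 (Fin n → ℂ)).symm (fun h => x h * ∑ j, Z h j * y j)‖ ≤ Zn * ‖x‖ * ‖y‖ := by
  have hy0 : (0:ℝ) ≤ ‖y‖ := norm_nonneg _
  have hrow : ∀ h : Fin n, ‖∑ j, Z h j * y j‖ ≤ Zn * ‖y‖ := by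
    intro h
    set a : EuclideanSpace ℂ (Fin n) := (WithLp.equiv 2 (Fin n → ℂ)).symm (fun j => conj (Z h j))
    have hinner : (inner ℂ a y : ℂ) = ∑ j, Z h j * y j := by
      simp [a, PiLp.inner_apply, RCLike.inner_apply, mul_comm]
    have hna : ‖a‖ = ‖(WithLp.equiv 2 (Fin n → ℂ)).symm (Z h)‖ := by
      rw [EuclideanSpace.norm_eq, EuclideanSpace.norm_eq]
      congr 1
      apply Finset.sum_congr rfl
      intro j _
      simp [a]
    calc ‖∑ j, Z h j * y j‖ = ‖(inner ℂ a y : ℂ)‖ := by rw [hinner]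
      _ ≤ ‖a‖ * ‖y‖ := norm_inner_le_norm a y
      _ ≤ Zn * ‖y‖ := by rw [hna]; exact mul_le_mul_of_nonneg_right (hZ h) hy0
  rw [EuclideanSpace.norm_eq]
  have hle : ∑ h, ‖(x h * ∑ j, Z h j * y j)‖ ^ 2 ≤ ∑ h, (Zn * ‖y‖) ^ 2 * ‖x h‖ ^ 2 := by
    apply Finset.sum_le_sum
    intro h _
    rw [norm_mul, mul_pow]
    rw [mul_comm ((Zn*‖y‖)^2)]
    apply mul_le_mul_of_nonneg_left _ (by positivity)
    exact pow_le_pow_left₀ (norm_nonneg _) (hrow h) 2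
  calc Real.sqrt (∑ h, ‖((WithLp.equiv 2 (Fin n → ℂ)).symm (fun h => x h * ∑ j, Z h j * y j)) h‖ ^ 2)
      = Real.sqrt (∑ h, ‖(x h * ∑ j, Z h j * y j)‖ ^ 2) := rfl
    _ ≤ Real.sqrt (∑ h, (Zn * ‖y‖) ^ 2 * ‖x h‖ ^ 2) := Real.sqrt_le_sqrt hle
    _ = Zn * ‖y‖ * Real.sqrt (∑ h, ‖x h‖ ^ 2) := by
        rw [← Finset.mul_sum, Real.sqrt_mul (by positivity), Real.sqrt_sq (by positivity)]
    _ = Zn * ‖x‖ * ‖y‖ := by rw [← EuclideanSpace.norm_eq x]; ring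

lemma conj_norm_eq {n : ℕ} (w : Fin n → ℂ) (v : EuclideanSpace ℂ (Fin n))
    (h : ∀ j, ‖w j‖ = ‖v j‖) :
    ‖(WithLp.equiv 2 (Fin n → ℂ)).symm w‖ = ‖v‖ := by
  rw [EuclideanSpace.norm_eq, EuclideanSpace.norm_eq]
  congr 1
  exact Finset.sum_congr rfl (fun j _ => by rw [show ((WithLp.equiv 2 (Fin n → ℂ)).symm w) j = w j from rfl, h j])

/-- Contraction property: under `V₀² > 4‖Z‖*‖s‖`, the map
`G(f) = −(1/V₀²) diag(f+s) Z (f̄+s̄)` is a contraction on the ball of radius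
`δ = 4‖Z‖*‖s‖²/V₀²` with Lipschitz constant `k = (2‖Z‖*/V₀²)(δ + ‖s‖) < 1`. -/
theorem stmt_9 {n : ℕ} (V₀ : ℝ) (hV : 0 < V₀)
    (Z : Matrix (Fin n) (Fin n) ℂ) (s : EuclideanSpace ℂ (Fin n))
    (Zn : ℝ) (hZn : Zn = ⨆ h, ‖(WithLp.equiv 2 (Fin n → ℂ)).symm (Z h)‖)
    (hcond : V₀ ^ 2 > 4 * Zn * ‖s‖)
    (δ : ℝ) (hδ : δ = 4 * Zn * ‖s‖ ^ 2 / V₀ ^ 2)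
    (k : ℝ) (hk : k = 2 * Zn / V₀ ^ 2 * (δ + ‖s‖))
    (G : EuclideanSpace ℂ (Fin n) → EuclideanSpace ℂ (Fin n))
    (hG : ∀ f, G f = (WithLp.equiv 2 (Fin n → ℂ)).symm (fun h =>
        -((V₀ : ℂ) ^ 2)⁻¹ * ((f h + s h) * ∑ j, Z h j * (conj (f j) + conj (s j))))) :
    k < 1 ∧ ∀ f' f'' : EuclideanSpace ℂ (Fin n), ‖f'‖ ≤ δ → ‖f''‖ ≤ δ →
      ‖G f' - G f''‖ ≤ k * ‖f' - f''‖ := by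
  have hV2 : (0:ℝ) < V₀ ^ 2 := by positivity
  have hZn0 : 0 ≤ Zn := by
    rw [hZn]; exact Real.iSup_nonneg (fun h => norm_nonneg _)
  have hZle : ∀ h, ‖(WithLp.equiv 2 (Fin n → ℂ)).symm (Z h)‖ ≤ Zn := by
    intro h
    rw [hZn]
    exact le_ciSup (f := fun h : Fin n => ‖(WithLp.equiv 2 (Fin n → ℂ)).symm (Z h)‖)
      (Set.Finite.bddAbove (Set.finite_range _)) h
  have hs0 : (0:ℝ) ≤ ‖s‖ := norm_nonneg _
  have ha : (0:ℝ) ≤ Zn * ‖s‖ := mul_nonneg hZn0 hs0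
  have hδ0 : 0 ≤ δ := by rw [hδ]; positivity
  have hk1 : k < 1 := by
    have hkc : k * (V₀ ^ 2) ^ 2 = 8 * (Zn * ‖s‖) ^ 2 + 2 * (Zn * ‖s‖) * V₀ ^ 2 := by
      rw [hk, hδ]; field_simp; ring
    nlinarith [sq_nonneg (Zn * ‖s‖), sq_nonneg V₀]
  refine ⟨hk1, fun f' f'' hf' hf'' => ?_⟩
  set d : EuclideanSpace ℂ (Fin n) := f' - f'' with hd
  set y1 : EuclideanSpace ℂ (Fin n) :=
    (WithLp.equiv 2 (Fin n → ℂ)).symm (fun j => conj (f' j + s j)) with hy1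
  set yd : EuclideanSpace ℂ (Fin n) :=
    (WithLp.equiv 2 (Fin n → ℂ)).symm (fun j => conj (d j)) with hyd
  set U : EuclideanSpace ℂ (Fin n) :=
    (WithLp.equiv 2 (Fin n → ℂ)).symm (fun h => d h * ∑ j, Z h j * y1 j) with hU
  set V : EuclideanSpace ℂ (Fin n) :=
    (WithLp.equiv 2 (Fin n → ℂ)).symm (fun h => (f'' h + s h) * ∑ j, Z h j * yd j) with hVv
  have hsplit : G f' - G f'' = (-((V₀ : ℂ) ^ 2)⁻¹) • (U + V) := by
    ext h
    have hdj : ∀ j, d j = f' j - f'' j := fun j => rfl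
    have hy1j : ∀ j, y1 j = conj (f' j) + conj (s j) := fun j => by
      simp [hy1, WithLp.equiv_symm_apply, PiLp.toLp_apply]
    have hydj : ∀ j, yd j = (conj (f' j) + conj (s j)) - (conj (f'' j) + conj (s j)) := fun j => by
      simp [hyd, WithLp.equiv_symm_apply, PiLp.toLp_apply, hdj j]
    have h1 : ∑ j, Z h j * yd j =
        (∑ j, Z h j * (conj (f' j) + conj (s j))) - ∑ j, Z h j * (conj (f'' j) + conj (s j)) := by
      rw [← Finset.sum_sub_distrib]
      exact Finset.sum_congr rfl (fun j _ => by rw [hydj j]; ring)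
    have h2 : ∑ j, Z h j * y1 j = ∑ j, Z h j * (conj (f' j) + conj (s j)) :=
      Finset.sum_congr rfl (fun j _ => by rw [hy1j j])
    simp only [hG, PiLp.sub_apply, PiLp.smul_apply, PiLp.add_apply,
      WithLp.equiv_symm_apply, PiLp.toLp_apply, smul_eq_mul, hU, hVv]
    rw [h1, h2, hdj h]
    ring
  have hnc : ‖(-((V₀ : ℂ) ^ 2)⁻¹)‖ = (V₀ ^ 2)⁻¹ := by
    rw [norm_neg, norm_inv, norm_pow, Complex.norm_real]
    simp [abs_of_pos hV]
  have hny1 : ‖y1‖ = ‖f' + s‖ := conj_norm_eq _ (f' + s) (fun j => by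
    simp only [PiLp.add_apply, ← map_add, RCLike.norm_conj])
  have hnyd : ‖yd‖ = ‖d‖ := conj_norm_eq _ d (fun j => by simp [hyd])
  have hb1 : ‖f' + s‖ ≤ δ + ‖s‖ := (norm_add_le _ _).trans (add_le_add_left hf' _)
  have hb2 : ‖f'' + s‖ ≤ δ + ‖s‖ := (norm_add_le _ _).trans (add_le_add_left hf'' _)
  have hd0 : (0:ℝ) ≤ ‖d‖ := norm_nonneg _
  have hU_le : ‖U‖ ≤ Zn * ‖d‖ * (δ + ‖s‖) := by
    calc ‖U‖ ≤ Zn * ‖d‖ * ‖y1‖ := key_bound Zn hZn0 Z hZle d y1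
      _ = Zn * ‖d‖ * ‖f' + s‖ := by rw [hny1]
      _ ≤ Zn * ‖d‖ * (δ + ‖s‖) := mul_le_mul_of_nonneg_left hb1 (by positivity)
  have hV_le : ‖V‖ ≤ Zn * (δ + ‖s‖) * ‖d‖ := by
    calc ‖V‖ ≤ Zn * ‖f'' + s‖ * ‖yd‖ := key_bound Zn hZn0 Z hZle (f'' + s) yd
      _ = Zn * ‖f'' + s‖ * ‖d‖ := by rw [hnyd]
      _ ≤ Zn * (δ + ‖s‖) * ‖d‖ := by
          apply mul_le_mul_of_nonneg_right _ hd0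
          exact mul_le_mul_of_nonneg_left hb2 hZn0
  calc ‖G f' - G f''‖ = (V₀ ^ 2)⁻¹ * ‖U + V‖ := by rw [hsplit, norm_smul, hnc]
    _ ≤ (V₀ ^ 2)⁻¹ * (‖U‖ + ‖V‖) :=
        mul_le_mul_of_nonneg_left (norm_add_le _ _) (by positivity)
    _ ≤ (V₀ ^ 2)⁻¹ * (Zn * ‖d‖ * (δ + ‖s‖) + Zn * (δ + ‖s‖) * ‖d‖) :=
        mul_le_mul_of_nonneg_left (add_le_add hU_le hV_le) (by positivity)
    _ = k * ‖d‖ := by rw [hk]; field_simp; ring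
end

section
/- Let V₀ > 0, s ∈ ℂⁿ, Z ∈ ℂ^{n×n}, ‖Z‖* := max_h ‖Z_{h•}‖₂, and suppose V₀² > 4‖Z‖*‖s‖₂. Then the equation f = −(1/V₀²)·diag(f+s)·Z·(conj(f)+conj(s)) has a unique solution f in the closed ball of radius 4‖Z‖*‖s‖₂²/V₀² around the origin. -/
open scoped ComplexConjugate

private lemma euc_norm_le {n : ℕ} (u v : EuclideanSpace ℂ (Fin n)) (c : ℝ)
    (hc : 0 ≤ c) (h : ∀ i, ‖u i‖ ≤ c * ‖v i‖) : ‖u‖ ≤ c * ‖v‖ := by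
  rw [EuclideanSpace.norm_eq, EuclideanSpace.norm_eq]
  calc Real.sqrt (∑ i, ‖u i‖ ^ 2) ≤ Real.sqrt (∑ i, (c * ‖v i‖) ^ 2) :=
        Real.sqrt_le_sqrt (Finset.sum_le_sum fun i _ =>
          pow_le_pow_left₀ (norm_nonneg _) (h i) 2)
    _ = c * Real.sqrt (∑ i, ‖v i‖ ^ 2) := by
        simp_rw [mul_pow, ← Finset.mul_sum]
        rw [Real.sqrt_mul (sq_nonneg c), Real.sqrt_sq hc]

private lemma norm_cvec {n : ℕ} (x : EuclideanSpace ℂ (Fin n)) :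
    ‖(WithLp.equiv 2 (Fin n → ℂ)).symm (fun k => conj (x k))‖ = ‖x‖ := by
  rw [EuclideanSpace.norm_eq, EuclideanSpace.norm_eq]
  simp [WithLp.equiv_symm_apply, PiLp.toLp_apply]

private lemma sum_bound {n : ℕ} (Z : Matrix (Fin n) (Fin n) ℂ) (h : Fin n)
    (x : EuclideanSpace ℂ (Fin n)) :
    ‖∑ k, Z h k * x k‖ ≤ ‖(WithLp.equiv 2 (Fin n → ℂ)).symm (Z h)‖ * ‖x‖ := by
  set a : EuclideanSpace ℂ (Fin n) :=
    (WithLp.equiv 2 (Fin n → ℂ)).symm (fun k => conj (Z h k)) with ha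
  have h1 : (inner ℂ a x : ℂ) = ∑ k, Z h k * x k := by
    simp [PiLp.inner_apply, RCLike.inner_apply, ha, WithLp.equiv_symm_apply, PiLp.toLp_apply, mul_comm]
  have h2 : ‖a‖ = ‖(WithLp.equiv 2 (Fin n → ℂ)).symm (Z h)‖ := by
    rw [EuclideanSpace.norm_eq, EuclideanSpace.norm_eq]
    simp [ha, WithLp.equiv_symm_apply, PiLp.toLp_apply]
  calc ‖∑ k, Z h k * x k‖ = ‖(inner ℂ a x : ℂ)‖ := by rw [h1]
    _ ≤ ‖a‖ * ‖x‖ := norm_inner_le_norm a x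
    _ = _ := by rw [h2]

/-- Existence and uniqueness of the fixed point: if `V₀² > 4‖Z‖*‖s‖₂` then the equation
`f = −(1/V₀²) diag(f+s) Z (f̄+s̄)` has a unique solution with `‖f‖₂ ≤ 4‖Z‖*‖s‖₂²/V₀²`. -/
theorem stmt_10 {n : ℕ} (V₀ : ℝ) (hV : 0 < V₀)
    (Z : Matrix (Fin n) (Fin n) ℂ) (s : EuclideanSpace ℂ (Fin n))
    (Zn : ℝ) (hZn : Zn = ⨆ h, ‖(WithLp.equiv 2 (Fin n → ℂ)).symm (Z h)‖)
    (hcond : V₀ ^ 2 > 4 * Zn * ‖s‖) :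
    ∃! f : EuclideanSpace ℂ (Fin n),
      ‖f‖ ≤ 4 * Zn * ‖s‖ ^ 2 / V₀ ^ 2 ∧
      f = (WithLp.equiv 2 (Fin n → ℂ)).symm (fun h =>
        -((V₀ : ℂ) ^ 2)⁻¹ * ((f h + s h) * ∑ k, Z h k * (conj (f k) + conj (s k)))) := by
  have hZn0 : 0 ≤ Zn := hZn ▸ Real.iSup_nonneg (fun h => norm_nonneg _)
  have ht0 : (0:ℝ) ≤ ‖s‖ := norm_nonneg s
  have hV2 : (0:ℝ) < V₀ ^ 2 := by positivity
  set t : ℝ := ‖s‖ with ht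
  set r : ℝ := 4 * Zn * t ^ 2 / V₀ ^ 2 with hr
  have hr0 : 0 ≤ r := by positivity
  set G : EuclideanSpace ℂ (Fin n) → EuclideanSpace ℂ (Fin n) := fun f =>
    (WithLp.equiv 2 (Fin n → ℂ)).symm (fun h =>
      -((V₀ : ℂ) ^ 2)⁻¹ * ((f h + s h) * ∑ k, Z h k * (conj (f k) + conj (s k)))) with hGdef
  set Pv : EuclideanSpace ℂ (Fin n) → EuclideanSpace ℂ (Fin n) → EuclideanSpace ℂ (Fin n) :=
    fun u w => (WithLp.equiv 2 (Fin n → ℂ)).symm (fun i =>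
      -((V₀ : ℂ) ^ 2)⁻¹ * (u i * ∑ k, Z i k * conj (w k))) with hPdef
  -- bound on row norms
  have hZrow : ∀ h : Fin n, ‖(WithLp.equiv 2 (Fin n → ℂ)).symm (Z h)‖ ≤ Zn := fun h =>
    hZn ▸ le_ciSup (f := fun h => ‖(WithLp.equiv 2 (Fin n → ℂ)).symm (Z h)‖)
      (Set.Finite.bddAbove (Set.finite_range _)) h
  have hA : ∀ (h : Fin n) (x : EuclideanSpace ℂ (Fin n)),
      ‖∑ k, Z h k * conj (x k)‖ ≤ Zn * ‖x‖ := by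
    intro h x
    have := sum_bound Z h ((WithLp.equiv 2 (Fin n → ℂ)).symm (fun k => conj (x k)))
    rw [norm_cvec] at this
    have heq : ∑ k, Z h k * ((WithLp.equiv 2 (Fin n → ℂ)).symm (fun k => conj (x k))) k
        = ∑ k, Z h k * conj (x k) := by
      simp [WithLp.equiv_symm_apply, PiLp.toLp_apply]
    rw [heq] at this
    exact this.trans (mul_le_mul_of_nonneg_right (hZrow h) (norm_nonneg _))
  have hVinv : ‖(-((V₀ : ℂ) ^ 2)⁻¹ : ℂ)‖ = (V₀ ^ 2)⁻¹ := by
    rw [norm_neg, norm_inv, norm_pow, Complex.norm_real, Real.norm_eq_abs, abs_of_pos hV]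
  -- norm bound for Pv
  have hB : ∀ u w, ‖Pv u w‖ ≤ (V₀ ^ 2)⁻¹ * (Zn * ‖w‖) * ‖u‖ := by
    intro u w
    apply euc_norm_le _ _ _ (by positivity)
    intro i
    have hval : (Pv u w) i = -((V₀ : ℂ) ^ 2)⁻¹ * (u i * ∑ k, Z i k * conj (w k)) := by
      simp [hPdef, WithLp.equiv_symm_apply, PiLp.toLp_apply]
    rw [hval, norm_mul, norm_mul, hVinv]
    calc (V₀ ^ 2)⁻¹ * (‖u i‖ * ‖∑ k, Z i k * conj (w k)‖)
        ≤ (V₀ ^ 2)⁻¹ * (‖u i‖ * (Zn * ‖w‖)) :=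
          mul_le_mul_of_nonneg_left
            (mul_le_mul_of_nonneg_left (hA i w) (norm_nonneg _)) (by positivity)
      _ = (V₀ ^ 2)⁻¹ * (Zn * ‖w‖) * ‖u i‖ := by ring
  have hGeq : ∀ f, G f = Pv (f + s) (f + s) := by
    intro f
    ext i
    simp [hGdef, hPdef, WithLp.equiv_symm_apply, PiLp.toLp_apply, PiLp.add_apply, map_add]
  have hsplit : ∀ f g, G f - G g = Pv (f - g) (f + s) + Pv (g + s) (f - g) := by
    intro f g
    rw [hGeq f, hGeq g]
    ext i
    have hd : (∑ k, Z i k * conj (f k - g k))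
        = (∑ k, Z i k * conj (f k + s k)) - (∑ k, Z i k * conj (g k + s k)) := by
      rw [← Finset.sum_sub_distrib]
      refine Finset.sum_congr rfl fun k _ => ?_
      simp only [map_add, map_sub]
      ring
    simp only [PiLp.sub_apply, PiLp.add_apply, hPdef, WithLp.equiv_symm_apply, PiLp.toLp_apply]
    rw [hd]
    ring
  have hrle : r ≤ t := by
    rw [hr, div_le_iff₀ hV2]
    nlinarith [mul_le_mul_of_nonneg_right hcond.le ht0]
  have h2t : r + t ≤ 2 * t := by linarith
  -- invariance of the closed ball
  have hGball : ∀ f : EuclideanSpace ℂ (Fin n), ‖f‖ ≤ r → ‖G f‖ ≤ r := by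
    intro f hf
    have hfs : ‖f + s‖ ≤ r + t := (norm_add_le f s).trans (by gcongr)
    have h1 : ‖G f‖ ≤ (V₀ ^ 2)⁻¹ * (Zn * ‖f + s‖) * ‖f + s‖ := hGeq f ▸ hB _ _
    have h2 : (V₀ ^ 2)⁻¹ * (Zn * ‖f + s‖) * ‖f + s‖
        ≤ (V₀ ^ 2)⁻¹ * (Zn * (r + t)) * (r + t) := by
      gcongr <;> positivity
    refine h1.trans (h2.trans ?_)
    have hsq : (r + t) ^ 2 ≤ (2 * t) ^ 2 := pow_le_pow_left₀ (by positivity) h2t 2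
    calc (V₀ ^ 2)⁻¹ * (Zn * (r + t)) * (r + t) = Zn * (r + t) ^ 2 / V₀ ^ 2 := by ring
      _ ≤ 4 * Zn * t ^ 2 / V₀ ^ 2 := by
          refine (div_le_div_iff_of_pos_right hV2).mpr ?_
          nlinarith [mul_le_mul_of_nonneg_left hsq hZn0]
      _ = r := hr.symm
  -- Lipschitz constant
  set L : ℝ := 2 * Zn * (r + t) / V₀ ^ 2 with hL
  have hL0 : 0 ≤ L := by positivity
  have hL1 : L < 1 := by
    rw [hL, div_lt_one hV2]
    nlinarith [mul_le_mul_of_nonneg_left h2t (by linarith : (0:ℝ) ≤ 2 * Zn)]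
  have hlip : ∀ f g : EuclideanSpace ℂ (Fin n), ‖f‖ ≤ r → ‖g‖ ≤ r →
      dist (G f) (G g) ≤ L * dist f g := by
    intro f g hf hg
    rw [dist_eq_norm, dist_eq_norm, hsplit f g]
    have hfs : ‖f + s‖ ≤ r + t := (norm_add_le f s).trans (by gcongr)
    have hgs : ‖g + s‖ ≤ r + t := (norm_add_le g s).trans (by gcongr)
    have hrt0 : (0:ℝ) ≤ r + t := by positivity
    calc ‖Pv (f - g) (f + s) + Pv (g + s) (f - g)‖
        ≤ ‖Pv (f - g) (f + s)‖ + ‖Pv (g + s) (f - g)‖ := norm_add_le _ _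
      _ ≤ (V₀ ^ 2)⁻¹ * (Zn * ‖f + s‖) * ‖f - g‖
          + (V₀ ^ 2)⁻¹ * (Zn * ‖f - g‖) * ‖g + s‖ := add_le_add (hB _ _) (hB _ _)
      _ ≤ (V₀ ^ 2)⁻¹ * (Zn * (r + t)) * ‖f - g‖
          + (V₀ ^ 2)⁻¹ * (Zn * ‖f - g‖) * (r + t) := by gcongr <;> positivity
      _ = L * ‖f - g‖ := by rw [hL]; field_simp; ring
  -- set up the contraction on the closed ball
  set K : Set (EuclideanSpace ℂ (Fin n)) := Metric.closedBall 0 r with hK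
  have hmaps : Set.MapsTo G K K := fun f hf =>
    mem_closedBall_zero_iff.mpr (hGball f (mem_closedBall_zero_iff.mp hf))
  have hlipOn : LipschitzOnWith (⟨L, hL0⟩ : NNReal) G K := by
    apply lipschitzOnWith_iff_dist_le_mul.mpr
    intro f hf g hg
    exact hlip f g (mem_closedBall_zero_iff.mp hf) (mem_closedBall_zero_iff.mp hg)
  haveI : Nonempty K := ⟨⟨0, Metric.mem_closedBall_self hr0⟩⟩
  haveI : CompleteSpace K := IsClosed.completeSpace_coe (hs := Metric.isClosed_closedBall)
  have hc : ContractingWith (⟨L, hL0⟩ : NNReal) (hmaps.restrict G K K) :=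
    ⟨by apply NNReal.coe_lt_coe.mp; exact_mod_cast hL1, hlipOn.mapsToRestrict hmaps⟩
  set x : K := ContractingWith.fixedPoint (hmaps.restrict G K K) hc with hx
  have hxfix : G (x : EuclideanSpace ℂ (Fin n)) = (x : EuclideanSpace ℂ (Fin n)) := by
    have := hc.fixedPoint_isFixedPt
    rw [← hx] at this
    exact congrArg Subtype.val this
  refine ⟨(x : EuclideanSpace ℂ (Fin n)), ⟨?_, ?_⟩, ?_⟩
  · exact mem_closedBall_zero_iff.mp x.2
  · exact hxfix.symm
  · rintro y ⟨hy1, hy2⟩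
    have hymem : y ∈ K := mem_closedBall_zero_iff.mpr hy1
    have hyfix : Function.IsFixedPt (hmaps.restrict G K K) ⟨y, hymem⟩ := by
      apply Subtype.ext
      exact hy2.symm
    have := hc.fixedPoint_unique hyfix
    rw [← hx] at this
    exact congrArg Subtype.val this
end

section
/- Under the hypotheses V₀ > 0 and V₀² > 4‖Z‖*‖s‖₂ (with ‖Z‖* = max_h ‖Z_{h•}‖₂), the unique fixed point f of G(f) = −(1/V₀²)diag(f+s)Z(f̄+s̄) in the ball of radius δ = 4‖Z‖*‖s‖₂²/V₀² gives a vector λ := V₀²·conj(f) with ‖λ‖₂ ≤ 4‖Z‖*‖s‖₂², such that v := V₀e^{jθ₀}(𝟙 + (1/V₀²)Z·s̄ + (1/V₀⁴)Z·λ) satisfies the power flow equations diag(conj(i))v = s with i = (e^{jθ₀}/V₀)(conj(f)+conj(s)) and v = V₀e^{jθ₀}𝟙 + Z·i. -/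
open scoped ComplexConjugate

private lemma pf_norm_le_mul {n : ℕ} (y x : EuclideanSpace ℂ (Fin n)) (C : ℝ)
    (hC : 0 ≤ C) (h : ∀ k, ‖y k‖ ≤ C * ‖x k‖) : ‖y‖ ≤ C * ‖x‖ := by
  rw [EuclideanSpace.norm_eq, EuclideanSpace.norm_eq,
    ← Real.sqrt_sq hC, ← Real.sqrt_mul (by positivity)]
  apply Real.sqrt_le_sqrt
  rw [Finset.mul_sum]
  apply Finset.sum_le_sum
  intro k _
  have := h k
  nlinarith [norm_nonneg (y k), norm_nonneg (x k)]

private lemma pf_row_bound {n : ℕ} (a : Fin n → ℂ) (x : EuclideanSpace ℂ (Fin n)) :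
    ‖∑ k, a k * x k‖ ≤ ‖((WithLp.equiv 2 (Fin n → ℂ)).symm a : EuclideanSpace ℂ (Fin n))‖ * ‖x‖ := by
  have h1 : (∑ k, a k * x k)
      = inner ℂ ((WithLp.equiv 2 (Fin n → ℂ)).symm (fun k => conj (a k)) : EuclideanSpace ℂ (Fin n)) x := by
    rw [PiLp.inner_apply]
    simp [RCLike.inner_apply, mul_comm]
  have h2 : ‖((WithLp.equiv 2 (Fin n → ℂ)).symm (fun k => conj (a k)) : EuclideanSpace ℂ (Fin n))‖
      = ‖((WithLp.equiv 2 (Fin n → ℂ)).symm a : EuclideanSpace ℂ (Fin n))‖ := by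
    rw [EuclideanSpace.norm_eq, EuclideanSpace.norm_eq]; simp
  rw [h1, ← h2]
  exact norm_inner_le_norm _ _

private lemma pf_conj_norm {n : ℕ} (w : EuclideanSpace ℂ (Fin n)) :
    ‖((WithLp.equiv 2 (Fin n → ℂ)).symm (fun k => conj (w k)) : EuclideanSpace ℂ (Fin n))‖ = ‖w‖ := by
  rw [EuclideanSpace.norm_eq, EuclideanSpace.norm_eq]; simp

private noncomputable def Tm {n : ℕ} (Z : Matrix (Fin n) (Fin n) ℂ)
    (x w : EuclideanSpace ℂ (Fin n)) : EuclideanSpace ℂ (Fin n) :=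
  (WithLp.equiv 2 (Fin n → ℂ)).symm (fun h => x h * ∑ k, Z h k * conj (w k))

private lemma Tm_apply {n : ℕ} (Z : Matrix (Fin n) (Fin n) ℂ)
    (x w : EuclideanSpace ℂ (Fin n)) (h : Fin n) :
    Tm Z x w h = x h * ∑ k, Z h k * conj (w k) := rfl

private lemma Tm_bound {n : ℕ} (Z : Matrix (Fin n) (Fin n) ℂ) (Zn : ℝ) (hZn0 : 0 ≤ Zn)
    (hrow : ∀ h, ‖((WithLp.equiv 2 (Fin n → ℂ)).symm (Z h) : EuclideanSpace ℂ (Fin n))‖ ≤ Zn)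
    (x w : EuclideanSpace ℂ (Fin n)) : ‖Tm Z x w‖ ≤ (Zn * ‖w‖) * ‖x‖ := by
  apply pf_norm_le_mul _ _ _ (by positivity)
  intro k
  rw [Tm_apply, norm_mul, mul_comm (Zn * ‖w‖) _]
  apply mul_le_mul_of_nonneg_left _ (norm_nonneg _)
  calc ‖∑ j, Z k j * conj (w j)‖
      ≤ ‖((WithLp.equiv 2 (Fin n → ℂ)).symm (Z k) : EuclideanSpace ℂ (Fin n))‖ *
        ‖((WithLp.equiv 2 (Fin n → ℂ)).symm (fun j => conj (w j)) : EuclideanSpace ℂ (Fin n))‖ :=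
        pf_row_bound (Z k) ((WithLp.equiv 2 (Fin n → ℂ)).symm (fun j => conj (w j)))
    _ ≤ Zn * ‖w‖ := by
        rw [pf_conj_norm]
        exact mul_le_mul_of_nonneg_right (hrow k) (norm_nonneg _)

/-- Theorem 1 (existence of a practical power flow solution): under `V₀² > 4‖Z‖*‖s‖₂`,
the fixed point `f` of `G` in the ball of radius `δ = 4‖Z‖*‖s‖₂²/V₀²` yields
`λ = V₀² f̄` with `‖λ‖₂ ≤ 4‖Z‖*‖s‖₂²`, such that
`v = V₀e^{jθ₀}(𝟙 + V₀⁻²Z s̄ + V₀⁻⁴Z λ)` together with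
`i = (e^{jθ₀}/V₀)(f̄ + s̄)` satisfies the power flow equations
`diag(ī) v = s` and `v = V₀e^{jθ₀}𝟙 + Z i`. -/
theorem stmt_11 {n : ℕ} (V₀ θ₀ : ℝ) (hV : 0 < V₀)
    (Z : Matrix (Fin n) (Fin n) ℂ) (s : EuclideanSpace ℂ (Fin n))
    (Zn : ℝ) (hZn : Zn = ⨆ h, ‖(WithLp.equiv 2 (Fin n → ℂ)).symm (Z h)‖)
    (hcond : V₀ ^ 2 > 4 * Zn * ‖s‖) :
    ∃ f lam : EuclideanSpace ℂ (Fin n), ∃ i v : Fin n → ℂ,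
      ‖f‖ ≤ 4 * Zn * ‖s‖ ^ 2 / V₀ ^ 2 ∧
      (∀ h, f h = -((V₀ : ℂ) ^ 2)⁻¹ *
          ((f h + s h) * ∑ k, Z h k * (conj (f k) + conj (s k)))) ∧
      (∀ h, lam h = (V₀ : ℂ) ^ 2 * conj (f h)) ∧
      ‖lam‖ ≤ 4 * Zn * ‖s‖ ^ 2 ∧
      (∀ h, i h = Complex.exp (θ₀ * Complex.I) / (V₀ : ℂ) * (conj (f h) + conj (s h))) ∧
      (∀ h, v h = (V₀ : ℂ) * Complex.exp (θ₀ * Complex.I) *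
          (1 + ((V₀ : ℂ) ^ 2)⁻¹ * (∑ k, Z h k * conj (s k)) +
            ((V₀ : ℂ) ^ 4)⁻¹ * (∑ k, Z h k * lam k))) ∧
      (∀ h, conj (i h) * v h = s h) ∧
      (∀ h, v h = (V₀ : ℂ) * Complex.exp (θ₀ * Complex.I) + ∑ k, Z h k * i k) := by
  have hV2 : (0:ℝ) < V₀ ^ 2 := by positivity
  have hs0 : (0:ℝ) ≤ ‖s‖ := norm_nonneg s
  have hbdd : BddAbove (Set.range fun h : Fin n =>
      ‖((WithLp.equiv 2 (Fin n → ℂ)).symm (Z h) : EuclideanSpace ℂ (Fin n))‖) :=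
    Set.Finite.bddAbove (Set.finite_range _)
  have hrow : ∀ h, ‖((WithLp.equiv 2 (Fin n → ℂ)).symm (Z h) : EuclideanSpace ℂ (Fin n))‖ ≤ Zn :=
    fun h => hZn ▸ le_ciSup hbdd h
  have hZn0 : 0 ≤ Zn := by
    rcases Nat.eq_zero_or_pos n with h0 | hpos
    · subst h0; rw [hZn, Real.iSup_of_isEmpty]
    · exact le_trans (norm_nonneg _) (hrow ⟨0, hpos⟩)
  set δ : ℝ := 4 * Zn * ‖s‖ ^ 2 / V₀ ^ 2 with hδdef
  have hδ0 : 0 ≤ δ := by positivity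
  have hδs : δ ≤ ‖s‖ := by
    rw [hδdef, div_le_iff₀ hV2]
    nlinarith
  set c : ℂ := -(((V₀:ℂ)) ^ 2)⁻¹ with hc
  have hcnorm : ‖c‖ = (V₀ ^ 2)⁻¹ := by
    rw [hc, norm_neg, norm_inv, norm_pow, Complex.norm_real, Real.norm_of_nonneg hV.le]
  set G : EuclideanSpace ℂ (Fin n) → EuclideanSpace ℂ (Fin n) :=
    fun x => c • Tm Z (x + s) (x + s) with hG
  -- G maps the ball of radius δ into itself
  have hmaps : ∀ x : EuclideanSpace ℂ (Fin n), ‖x‖ ≤ δ → ‖G x‖ ≤ δ := by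
    intro x hx
    have h1 : ‖x + s‖ ≤ 2 * ‖s‖ := le_trans (norm_add_le x s) (by linarith)
    have h2 : ‖G x‖ ≤ (V₀ ^ 2)⁻¹ * ((Zn * ‖x + s‖) * ‖x + s‖) := by
      rw [hG]
      simp only [norm_smul, hcnorm]
      exact mul_le_mul_of_nonneg_left (Tm_bound Z Zn hZn0 hrow _ _) (by positivity)
    have h4 : ‖x + s‖ * ‖x + s‖ ≤ 4 * ‖s‖ ^ 2 := by nlinarith [norm_nonneg (x + s)]
    have h3 : (Zn * ‖x + s‖) * ‖x + s‖ ≤ Zn * (4 * ‖s‖ ^ 2) := by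
      rw [mul_assoc]
      exact mul_le_mul_of_nonneg_left h4 hZn0
    calc ‖G x‖ ≤ (V₀ ^ 2)⁻¹ * (Zn * (4 * ‖s‖ ^ 2)) :=
          le_trans h2 (mul_le_mul_of_nonneg_left h3 (by positivity))
      _ = δ := by rw [hδdef]; field_simp
  -- decomposition of differences of G
  have hdecomp : ∀ a b : EuclideanSpace ℂ (Fin n),
      G a - G b = c • (Tm Z (a - b) (a + s) + Tm Z (b + s) (a - b)) := by
    intro a b
    rw [hG]
    simp only [← smul_sub]
    congr 1
    ext h
    simp only [Tm_apply, PiLp.sub_apply, PiLp.add_apply, map_add, map_sub, mul_add, mul_sub,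
      Finset.sum_add_distrib, Finset.sum_sub_distrib]
    ring
  -- contraction on the closed ball
  set B := Metric.closedBall (0 : EuclideanSpace ℂ (Fin n)) δ with hB
  haveI : CompleteSpace B := IsClosed.completeSpace_coe (hs := Metric.isClosed_closedBall)
  haveI : Nonempty B := ⟨⟨0, Metric.mem_closedBall_self hδ0⟩⟩
  have hmem : ∀ x : B, ‖(x : EuclideanSpace ℂ (Fin n))‖ ≤ δ := fun x =>
    mem_closedBall_zero_iff.mp x.2
  set K : NNReal := ⟨4 * Zn * ‖s‖ / V₀ ^ 2, by positivity⟩ with hK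
  have hK1 : K < 1 := by
    rw [← NNReal.coe_lt_coe]
    show 4 * Zn * ‖s‖ / V₀ ^ 2 < 1
    rw [div_lt_one hV2]
    exact hcond
  set G' : B → B := fun x => ⟨G x,
    mem_closedBall_zero_iff.mpr (hmaps x (hmem x))⟩ with hG'
  have hlip : LipschitzWith K G' := by
    apply LipschitzWith.of_dist_le_mul
    intro a b
    rw [Subtype.dist_eq, Subtype.dist_eq, dist_eq_norm, dist_eq_norm]
    show ‖G a.1 - G b.1‖ ≤ (4 * Zn * ‖s‖ / V₀ ^ 2) * ‖a.1 - b.1‖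
    have has : ‖a.1 + s‖ ≤ 2 * ‖s‖ := le_trans (norm_add_le _ _) (by linarith [hmem a])
    have hbs : ‖b.1 + s‖ ≤ 2 * ‖s‖ := le_trans (norm_add_le _ _) (by linarith [hmem b])
    have hT1 := Tm_bound Z Zn hZn0 hrow (a.1 - b.1) (a.1 + s)
    have hT2 := Tm_bound Z Zn hZn0 hrow (b.1 + s) (a.1 - b.1)
    have hsum : ‖Tm Z (a.1 - b.1) (a.1 + s)‖ + ‖Tm Z (b.1 + s) (a.1 - b.1)‖
        ≤ 4 * Zn * ‖s‖ * ‖a.1 - b.1‖ := by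
      nlinarith [hT1, hT2,
        mul_le_mul_of_nonneg_right (mul_le_mul_of_nonneg_left has hZn0) (norm_nonneg (a.1 - b.1)),
        mul_le_mul_of_nonneg_right (mul_le_mul_of_nonneg_left hbs hZn0) (norm_nonneg (a.1 - b.1))]
    calc ‖G a.1 - G b.1‖
        = ‖c‖ * ‖Tm Z (a.1 - b.1) (a.1 + s) + Tm Z (b.1 + s) (a.1 - b.1)‖ := by
          rw [hdecomp, norm_smul]
      _ ≤ (V₀ ^ 2)⁻¹ * (‖Tm Z (a.1 - b.1) (a.1 + s)‖ + ‖Tm Z (b.1 + s) (a.1 - b.1)‖) := by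
          rw [hcnorm]
          exact mul_le_mul_of_nonneg_left (norm_add_le _ _) (by positivity)
      _ ≤ (V₀ ^ 2)⁻¹ * (4 * Zn * ‖s‖ * ‖a.1 - b.1‖) :=
          mul_le_mul_of_nonneg_left hsum (by positivity)
      _ = (4 * Zn * ‖s‖ / V₀ ^ 2) * ‖a.1 - b.1‖ := by ring
  have cw : ContractingWith K G' := ⟨hK1, hlip⟩
  set f₀ := ContractingWith.fixedPoint G' cw with hf₀
  have hfixed : G' f₀ = f₀ := cw.fixedPoint_isFixedPt
  set f : EuclideanSpace ℂ (Fin n) := f₀.1 with hf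
  have hGf : G f = f := congrArg Subtype.val hfixed
  have hfδ : ‖f‖ ≤ δ := hmem f₀
  have hV0 : ((V₀:ℂ)) ≠ 0 := by
    exact_mod_cast hV.ne'
  have hfeq : ∀ h, f h = -((V₀ : ℂ) ^ 2)⁻¹ *
      ((f h + s h) * ∑ k, Z h k * (conj (f k) + conj (s k))) := by
    intro h
    have h1 : G f h = f h := congrFun (congrArg (WithLp.equiv 2 (Fin n → ℂ)) hGf) h
    refine h1.symm.trans ?_
    simp only [hG, PiLp.smul_apply, Tm_apply, PiLp.add_apply, map_add, smul_eq_mul, hc]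
  -- lam
  set lam : EuclideanSpace ℂ (Fin n) :=
    (WithLp.equiv 2 (Fin n → ℂ)).symm (fun h => (V₀:ℂ) ^ 2 * conj (f h)) with hlam
  have hlam_apply : ∀ h, lam h = (V₀:ℂ) ^ 2 * conj (f h) := fun h => rfl
  have hlamnorm : ‖lam‖ ≤ 4 * Zn * ‖s‖ ^ 2 := by
    have h1 : ‖lam‖ ≤ V₀ ^ 2 * ‖f‖ := by
      apply pf_norm_le_mul _ _ _ (by positivity)
      intro k
      rw [hlam_apply k, norm_mul, norm_pow, Complex.norm_real,
        Real.norm_of_nonneg hV.le, RCLike.norm_conj]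
    calc ‖lam‖ ≤ V₀ ^ 2 * δ := le_trans h1 (mul_le_mul_of_nonneg_left hfδ (by positivity))
      _ = 4 * Zn * ‖s‖ ^ 2 := by rw [hδdef]; field_simp
  -- i and v
  set e : ℂ := Complex.exp (θ₀ * Complex.I) with he_def
  have he : conj e * e = 1 := by
    rw [he_def, ← Complex.exp_conj, ← Complex.exp_add]
    simp [Complex.conj_ofReal]
  set i : Fin n → ℂ := fun h => e / (V₀:ℂ) * (conj (f h) + conj (s h)) with hi
  set v : Fin n → ℂ := fun h => (V₀ : ℂ) * e *
      (1 + ((V₀ : ℂ) ^ 2)⁻¹ * (∑ k, Z h k * conj (s k)) +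
        ((V₀ : ℂ) ^ 4)⁻¹ * (∑ k, Z h k * lam k)) with hv
  refine ⟨f, lam, i, v, hfδ, hfeq, hlam_apply, hlamnorm, fun h => rfl, fun h => rfl, ?_, ?_⟩
  · -- conj (i h) * v h = s h
    intro h
    have hfe : (f h + s h) * ((∑ k, Z h k * conj (f k)) + ∑ k, Z h k * conj (s k))
        = -((V₀:ℂ) ^ 2) * f h := by
      have h1 := hfeq h
      have h2 : (∑ k, Z h k * (conj (f k) + conj (s k)))
          = (∑ k, Z h k * conj (f k)) + ∑ k, Z h k * conj (s k) := by
        rw [← Finset.sum_add_distrib]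
        exact Finset.sum_congr rfl fun k _ => by ring
      rw [h2] at h1
      conv_rhs => rw [h1]
      field_simp
    have hlamsum : (∑ k, Z h k * lam k) = (V₀:ℂ) ^ 2 * ∑ k, Z h k * conj (f k) := by
      rw [Finset.mul_sum]
      exact Finset.sum_congr rfl fun k _ => by rw [hlam_apply k]; ring
    have hconj_i : conj (i h) = conj e / (V₀:ℂ) * (f h + s h) := by
      rw [hi]
      simp [map_add, map_div₀, Complex.conj_ofReal]
    have hv4 : ((V₀:ℂ) ^ 4)⁻¹ * (∑ k, Z h k * lam k)
        = ((V₀:ℂ) ^ 2)⁻¹ * ∑ k, Z h k * conj (f k) := by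
      rw [hlamsum]
      field_simp
    rw [hconj_i]
    simp only [hv]
    rw [hv4]
    set A := ∑ k, Z h k * conj (s k)
    set Bc := ∑ k, Z h k * conj (f k)
    have h2 : ((V₀:ℂ)^2)⁻¹ * ((f h + s h) * (Bc + A)) = -(f h) := by
      rw [hfe]; field_simp
    calc (conj e / (V₀:ℂ) * (f h + s h)) *
          ((V₀:ℂ) * e * (1 + ((V₀:ℂ)^2)⁻¹ * A + ((V₀:ℂ)^2)⁻¹ * Bc))
        = (conj e * e) * (((V₀:ℂ) * ((V₀:ℂ))⁻¹) *
            ((f h + s h) + ((V₀:ℂ)^2)⁻¹ * ((f h + s h) * (Bc + A)))) := by ring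
      _ = s h := by rw [he, h2, mul_inv_cancel₀ hV0]; ring
  · -- v h = V₀ e + ∑ Z h k * i k
    intro h
    have hisum : (∑ k, Z h k * i k)
        = e / (V₀:ℂ) * ((∑ k, Z h k * conj (f k)) + ∑ k, Z h k * conj (s k)) := by
      rw [mul_add, Finset.mul_sum, Finset.mul_sum, ← Finset.sum_add_distrib]
      exact Finset.sum_congr rfl fun k _ => by rw [hi]; ring
    have hlamsum : (∑ k, Z h k * lam k) = (V₀:ℂ) ^ 2 * ∑ k, Z h k * conj (f k) := by
      rw [Finset.mul_sum]
      exact Finset.sum_congr rfl fun k _ => by rw [hlam_apply k]; ring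
    simp only [hv]
    rw [hisum, hlamsum]
    field_simp
    ring
end

section
/- For p, q ∈ [1,∞] with 1/p+1/q = 1: if V₀ > 0 and V₀² > 4‖Z‖*_q‖s‖_p where ‖Z‖*_q := max_h ‖Z_{h•}‖_q, then the map G(f) = −(1/V₀²)diag(f+s)Z(f̄+s̄) has a unique fixed point in the closed p-norm ball of radius 4‖Z‖*_q‖s‖_p²/V₀². -/
open scoped ENNReal ComplexConjugate

private lemma pilp_norm_mono {n : ℕ} (p : ℝ≥0∞) [Fact (1 ≤ p)] {x y : Fin n → ℂ}
    (h : ∀ i, ‖x i‖ ≤ ‖y i‖) :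
    ‖(WithLp.equiv p (Fin n → ℂ)).symm x‖ ≤ ‖(WithLp.equiv p (Fin n → ℂ)).symm y‖ := by
  rcases eq_or_ne p ∞ with rfl | hp
  · rw [PiLp.norm_eq_ciSup, PiLp.norm_eq_ciSup]
    exact ciSup_mono (Set.Finite.bddAbove (Set.finite_range _)) h
  · have hp0 : 0 < p.toReal :=
      ENNReal.toReal_pos (lt_of_lt_of_le zero_lt_one Fact.out).ne' hp
    rw [PiLp.norm_eq_sum hp0, PiLp.norm_eq_sum hp0]
    refine Real.rpow_le_rpow (by positivity) ?_ (by positivity)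
    refine Finset.sum_le_sum fun i _ => ?_
    simp only [WithLp.equiv_symm_apply, PiLp.toLp_apply]
    exact Real.rpow_le_rpow (norm_nonneg _) (h i) hp0.le

private lemma hoelder_aux {n : ℕ} (p q : ℝ≥0∞) [Fact (1 ≤ p)] [Fact (1 ≤ q)]
    (hpq : 1 / p + 1 / q = 1) (a b : Fin n → ℂ) :
    ‖∑ k, a k * b k‖ ≤
      ‖(WithLp.equiv q (Fin n → ℂ)).symm a‖ * ‖(WithLp.equiv p (Fin n → ℂ)).symm b‖ := by
  have hq1 : (1 : ℝ≥0∞) ≤ q := Fact.out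
  have hp1 : (1 : ℝ≥0∞) ≤ p := Fact.out
  have step : ‖∑ k, a k * b k‖ ≤ ∑ k, ‖a k‖ * ‖b k‖ :=
    (norm_sum_le _ _).trans (le_of_eq (by simp [norm_mul]))
  refine step.trans ?_
  have h1 : ((1 : ℝ≥0∞)).toReal = 1 := by simp
  rcases eq_or_ne p ∞ with rfl | hpt
  · have hq : q = 1 := by
      have h' : q⁻¹ = 1 := by simpa [one_div] using hpq
      exact ENNReal.inv_eq_one.mp h'
    subst hq
    have ha : ‖(WithLp.equiv 1 (Fin n → ℂ)).symm a‖ = ∑ k, ‖a k‖ := by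
      rw [PiLp.norm_eq_sum (by simp)]
      simp [WithLp.equiv_symm_apply]
    have hb : ∀ k, ‖b k‖ ≤ ‖(WithLp.equiv ∞ (Fin n → ℂ)).symm b‖ := fun k => by
      rw [PiLp.norm_eq_ciSup]
      exact le_ciSup (f := fun i => ‖(WithLp.equiv ∞ (Fin n → ℂ)).symm b i‖)
        (Set.Finite.bddAbove (Set.finite_range _)) k
    rw [ha, Finset.sum_mul]
    exact Finset.sum_le_sum fun k _ =>
      mul_le_mul_of_nonneg_left (hb k) (norm_nonneg _)
  rcases eq_or_ne q ∞ with rfl | hqt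
  · have hp : p = 1 := by
      have h' : p⁻¹ = 1 := by simpa [one_div] using hpq
      exact ENNReal.inv_eq_one.mp h'
    subst hp
    have hb : ‖(WithLp.equiv 1 (Fin n → ℂ)).symm b‖ = ∑ k, ‖b k‖ := by
      rw [PiLp.norm_eq_sum (by simp)]
      simp [WithLp.equiv_symm_apply]
    have ha : ∀ k, ‖a k‖ ≤ ‖(WithLp.equiv ∞ (Fin n → ℂ)).symm a‖ := fun k => by
      rw [PiLp.norm_eq_ciSup]
      exact le_ciSup (f := fun i => ‖(WithLp.equiv ∞ (Fin n → ℂ)).symm a i‖)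
        (Set.Finite.bddAbove (Set.finite_range _)) k
    rw [hb, Finset.mul_sum]
    exact Finset.sum_le_sum fun k _ =>
      mul_le_mul_of_nonneg_right (ha k) (norm_nonneg _)
  · have hp0 : p ≠ 0 := (lt_of_lt_of_le zero_lt_one hp1).ne'
    have hq0 : q ≠ 0 := (lt_of_lt_of_le zero_lt_one hq1).ne'
    have hsum : p.toReal⁻¹ + q.toReal⁻¹ = 1 := by
      have h' : p⁻¹ + q⁻¹ = 1 := by simpa [one_div] using hpq
      have := congrArg ENNReal.toReal h'
      rwa [ENNReal.toReal_add (by simp [hp0]) (by simp [hq0]), ENNReal.toReal_inv,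
        ENNReal.toReal_inv, ENNReal.toReal_one] at this
    have hpr : 1 < p.toReal := by
      rcases lt_or_eq_of_le hp1 with h | h
      · rw [← ENNReal.toReal_one]
        exact (ENNReal.toReal_lt_toReal (by simp) hpt).mpr h
      · exfalso
        have h' : p⁻¹ + q⁻¹ = 1 := by simpa [one_div] using hpq
        rw [← h] at h'
        have h'' : (1 : ℝ≥0∞) + q⁻¹ = 1 + 0 := by simpa using h'
        exact hqt (ENNReal.inv_eq_zero.mp ((ENNReal.add_right_inj ENNReal.one_ne_top).mp h''))
    have hqr : 1 < q.toReal := by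
      rcases lt_or_eq_of_le hq1 with h | h
      · rw [← ENNReal.toReal_one]
        exact (ENNReal.toReal_lt_toReal (by simp) hqt).mpr h
      · exfalso
        have h' : q⁻¹ + p⁻¹ = 1 := by rw [add_comm]; simpa [one_div] using hpq
        rw [← h] at h'
        have h'' : (1 : ℝ≥0∞) + p⁻¹ = 1 + 0 := by simpa using h'
        exact hpt (ENNReal.inv_eq_zero.mp ((ENNReal.add_right_inj ENNReal.one_ne_top).mp h''))
    have hconj : Real.HolderConjugate q.toReal p.toReal :=
      Real.holderConjugate_iff.mpr ⟨hqr, by rw [add_comm]; exact hsum⟩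
    have hp0' : 0 < p.toReal := by linarith
    have hq0' : 0 < q.toReal := by linarith
    rw [PiLp.norm_eq_sum hq0', PiLp.norm_eq_sum hp0']
    simp only [WithLp.equiv_symm_apply, PiLp.toLp_apply]
    exact Real.inner_le_Lp_mul_Lq_of_nonneg Finset.univ hconj
      (fun i _ => norm_nonneg _) (fun i _ => norm_nonneg _)

private lemma pilp_key {n : ℕ} (p : ℝ≥0∞) [Fact (1 ≤ p)]
    (u : PiLp p (fun _ : Fin n => ℂ)) (c : Fin n → ℂ) (C : ℝ)
    (hC : 0 ≤ C) (hc : ∀ h, ‖c h‖ ≤ C) :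
    ‖(WithLp.equiv p (Fin n → ℂ)).symm (fun h => u h * c h)‖ ≤ C * ‖u‖ := by
  have h1 : ‖(WithLp.equiv p (Fin n → ℂ)).symm (fun h => u h * c h)‖ ≤
      ‖(WithLp.equiv p (Fin n → ℂ)).symm (fun h => C • u h)‖ := by
    refine pilp_norm_mono p fun i => ?_
    rw [norm_mul, norm_smul, Real.norm_eq_abs, abs_of_nonneg hC, mul_comm]
    exact mul_le_mul_of_nonneg_right (hc i) (norm_nonneg _)
  have h2 : (WithLp.equiv p (Fin n → ℂ)).symm (fun h => C • u h) = C • u := rfl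
  rw [h2, norm_smul, Real.norm_eq_abs, abs_of_nonneg hC] at h1
  exact h1

private lemma pilp_conj_norm {n : ℕ} (p : ℝ≥0∞) [Fact (1 ≤ p)]
    (w : PiLp p (fun _ : Fin n => ℂ)) :
    ‖(WithLp.equiv p (Fin n → ℂ)).symm (fun k => conj (w k))‖ = ‖w‖ := by
  have hle := pilp_norm_mono (x := fun k => conj (w k)) (y := fun k => w k) p
    (fun i => by simp)
  have hge := pilp_norm_mono (x := fun k => w k) (y := fun k => conj (w k)) p
    (fun i => by simp)
  have hw : (WithLp.equiv p (Fin n → ℂ)).symm (fun k => w k) = w := rfl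
  rw [hw] at hle hge
  exact le_antisymm hle hge

/-- p-norm generalization of Theorem 1: for conjugate exponents `p, q ∈ [1,∞]`, if
`V₀² > 4‖Z‖*_q‖s‖_p` then `G(f) = −(1/V₀²) diag(f+s) Z (f̄+s̄)` has a unique fixed point
in the closed p-norm ball of radius `4‖Z‖*_q‖s‖_p²/V₀²`. -/
theorem stmt_16 {n : ℕ} (p q : ℝ≥0∞) [Fact (1 ≤ p)] [Fact (1 ≤ q)]
    (hpq : 1 / p + 1 / q = 1) (V₀ : ℝ) (hV : 0 < V₀)
    (Z : Matrix (Fin n) (Fin n) ℂ) (s : PiLp p (fun _ : Fin n => ℂ))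
    (Zn : ℝ) (hZn : Zn = ⨆ h, ‖(WithLp.equiv q (Fin n → ℂ)).symm (Z h)‖)
    (hcond : V₀ ^ 2 > 4 * Zn * ‖s‖) :
    ∃! f : PiLp p (fun _ : Fin n => ℂ),
      ‖f‖ ≤ 4 * Zn * ‖s‖ ^ 2 / V₀ ^ 2 ∧
      f = (WithLp.equiv p (Fin n → ℂ)).symm (fun h =>
        -((V₀ : ℂ) ^ 2)⁻¹ * ((f h + s h) * ∑ k, Z h k * (conj (f k) + conj (s k)))) := by
  classical
  have hV2 : (0:ℝ) < V₀ ^ 2 := by positivity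
  have rowle : ∀ h, ‖(WithLp.equiv q (Fin n → ℂ)).symm (Z h)‖ ≤ Zn := by
    intro h
    rw [hZn]
    exact le_ciSup (f := fun h => ‖(WithLp.equiv q (Fin n → ℂ)).symm (Z h)‖)
      (Set.Finite.bddAbove (Set.finite_range _)) h
  have hZn0 : 0 ≤ Zn := by
    rw [hZn]
    exact Real.iSup_nonneg fun h => norm_nonneg _
  set R := 4 * Zn * ‖s‖ ^ 2 / V₀ ^ 2 with hR
  set K := 4 * Zn * ‖s‖ / V₀ ^ 2 with hK
  have hK0 : 0 ≤ K := by positivity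
  have hK1 : K < 1 := (div_lt_one hV2).mpr hcond
  have hR0 : 0 ≤ R := by positivity
  have hRs : R ≤ ‖s‖ := by
    have hRK : R = K * ‖s‖ := by rw [hR, hK]; field_simp
    rw [hRK]
    nlinarith [norm_nonneg s]
  set S : PiLp p (fun _ : Fin n => ℂ) → Fin n → ℂ :=
    fun w h => ∑ k, Z h k * conj (w k) with hSdef
  set G : PiLp p (fun _ : Fin n => ℂ) → PiLp p (fun _ : Fin n => ℂ) :=
    fun f => (WithLp.equiv p (Fin n → ℂ)).symm
      (fun h => (f + s) h * (-((V₀ : ℂ) ^ 2)⁻¹ * S (f + s) h)) with hGdef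
  have hGstmt : ∀ f, G f = (WithLp.equiv p (Fin n → ℂ)).symm (fun h =>
      -((V₀ : ℂ) ^ 2)⁻¹ * ((f h + s h) * ∑ k, Z h k * (conj (f k) + conj (s k)))) := by
    intro f
    rw [hGdef]
    refine congrArg _ (funext fun h => ?_)
    simp only [hSdef, PiLp.add_apply, map_add]
    ring
  have hS : ∀ (w : PiLp p (fun _ : Fin n => ℂ)) (h : Fin n), ‖S w h‖ ≤ Zn * ‖w‖ := by
    intro w h
    refine (hoelder_aux p q hpq (Z h) (fun k => conj (w k))).trans ?_
    rw [pilp_conj_norm]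
    exact mul_le_mul_of_nonneg_right (rowle h) (norm_nonneg _)
  have hscal : ‖(-((V₀ : ℂ) ^ 2)⁻¹)‖ = (V₀ ^ 2)⁻¹ := by
    rw [norm_neg, norm_inv, norm_pow, Complex.norm_real, Real.norm_eq_abs, abs_of_pos hV]
  have hGle : ∀ f, ‖G f‖ ≤ (V₀ ^ 2)⁻¹ * (Zn * ‖f + s‖) * ‖f + s‖ := by
    intro f
    rw [hGdef]
    refine pilp_key p (f + s) _ ((V₀ ^ 2)⁻¹ * (Zn * ‖f + s‖)) (by positivity) ?_
    intro h
    rw [norm_mul, hscal]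
    exact mul_le_mul_of_nonneg_left (hS _ h) (by positivity)
  have hGdiff : ∀ f g, ‖G f - G g‖ ≤
      (V₀ ^ 2)⁻¹ * Zn * (‖f + s‖ + ‖g + s‖) * ‖f - g‖ := by
    intro f g
    have hfsgs : (f + s) - (g + s) = f - g := by abel
    have hS2 : ∀ h, S (f - g) h = S (f + s) h - S (g + s) h := by
      intro h
      rw [← hfsgs]
      simp only [hSdef, PiLp.sub_apply, map_sub, mul_sub]
      rw [Finset.sum_sub_distrib]
    have hsplit : G f - G g =
        (WithLp.equiv p (Fin n → ℂ)).symm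
          (fun h => (f - g) h * (-((V₀ : ℂ) ^ 2)⁻¹ * S (f + s) h)) +
        (WithLp.equiv p (Fin n → ℂ)).symm
          (fun h => (g + s) h * (-((V₀ : ℂ) ^ 2)⁻¹ * S (f - g) h)) := by
      apply (WithLp.equiv p (Fin n → ℂ)).injective
      funext h
      rw [hGdef]
      simp only [WithLp.equiv_apply, WithLp.ofLp_sub, WithLp.ofLp_add, WithLp.equiv_symm_apply, PiLp.toLp_apply, Equiv.apply_symm_apply,
        Pi.add_apply, Pi.sub_apply, hS2 h, PiLp.add_apply, PiLp.sub_apply]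
      ring
    rw [hsplit]
    refine (norm_add_le _ _).trans ?_
    have h1 : ‖(WithLp.equiv p (Fin n → ℂ)).symm
        (fun h => (f - g) h * (-((V₀ : ℂ) ^ 2)⁻¹ * S (f + s) h))‖ ≤
        ((V₀ ^ 2)⁻¹ * (Zn * ‖f + s‖)) * ‖f - g‖ := by
      refine pilp_key p (f - g) _ _ (by positivity) ?_
      intro h
      rw [norm_mul, hscal]
      exact mul_le_mul_of_nonneg_left (hS _ h) (by positivity)
    have h2 : ‖(WithLp.equiv p (Fin n → ℂ)).symm
        (fun h => (g + s) h * (-((V₀ : ℂ) ^ 2)⁻¹ * S (f - g) h))‖ ≤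
        ((V₀ ^ 2)⁻¹ * (Zn * ‖f - g‖)) * ‖g + s‖ := by
      refine pilp_key p (g + s) _ _ (by positivity) ?_
      intro h
      rw [norm_mul, hscal]
      exact mul_le_mul_of_nonneg_left (hS _ h) (by positivity)
    have := add_le_add h1 h2
    nlinarith [this]
  -- ball facts
  have hball : ∀ f : PiLp p (fun _ : Fin n => ℂ), ‖f‖ ≤ R → ‖f + s‖ ≤ 2 * ‖s‖ := by
    intro f hf
    calc ‖f + s‖ ≤ ‖f‖ + ‖s‖ := norm_add_le _ _
    _ ≤ 2 * ‖s‖ := by linarith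
  have hGball : ∀ f : PiLp p (fun _ : Fin n => ℂ), ‖f‖ ≤ R → ‖G f‖ ≤ R := by
    intro f hf
    have ht := hball f hf
    have htn : (0:ℝ) ≤ ‖f + s‖ := norm_nonneg _
    refine (hGle f).trans ?_
    have ht2 : ‖f + s‖ * ‖f + s‖ ≤ (2 * ‖s‖) * (2 * ‖s‖) :=
      mul_le_mul ht ht htn (by positivity)
    have h1 : Zn * ‖f + s‖ * ‖f + s‖ ≤ Zn * (2 * ‖s‖) * (2 * ‖s‖) := by
      calc Zn * ‖f + s‖ * ‖f + s‖ = Zn * (‖f + s‖ * ‖f + s‖) := by ring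
        _ ≤ Zn * ((2 * ‖s‖) * (2 * ‖s‖)) := mul_le_mul_of_nonneg_left ht2 hZn0
        _ = Zn * (2 * ‖s‖) * (2 * ‖s‖) := by ring
    have h2 : (V₀ ^ 2)⁻¹ * (Zn * ‖f + s‖ * ‖f + s‖) ≤
        (V₀ ^ 2)⁻¹ * (Zn * (2 * ‖s‖) * (2 * ‖s‖)) :=
      mul_le_mul_of_nonneg_left h1 (by positivity)
    calc (V₀ ^ 2)⁻¹ * (Zn * ‖f + s‖) * ‖f + s‖
        = (V₀ ^ 2)⁻¹ * (Zn * ‖f + s‖ * ‖f + s‖) := by ring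
      _ ≤ (V₀ ^ 2)⁻¹ * (Zn * (2 * ‖s‖) * (2 * ‖s‖)) := h2
      _ = R := by rw [hR]; ring
  have hcontr : ∀ f g : PiLp p (fun _ : Fin n => ℂ), ‖f‖ ≤ R → ‖g‖ ≤ R →
      ‖G f - G g‖ ≤ K * ‖f - g‖ := by
    intro f g hf hg
    refine (hGdiff f g).trans ?_
    have hu : ‖f + s‖ + ‖g + s‖ ≤ 4 * ‖s‖ := by
      have := hball f hf; have := hball g hg; linarith
    have h1 : (V₀ ^ 2)⁻¹ * Zn * (‖f + s‖ + ‖g + s‖) ≤ K := by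
      rw [hK, div_eq_mul_inv]
      have : (V₀ ^ 2)⁻¹ * Zn * (‖f + s‖ + ‖g + s‖) ≤ (V₀ ^ 2)⁻¹ * Zn * (4 * ‖s‖) :=
        mul_le_mul_of_nonneg_left hu (by positivity)
      calc (V₀ ^ 2)⁻¹ * Zn * (‖f + s‖ + ‖g + s‖) ≤ (V₀ ^ 2)⁻¹ * Zn * (4 * ‖s‖) := this
        _ = 4 * Zn * ‖s‖ * (V₀ ^ 2)⁻¹ := by ring
    exact mul_le_mul_of_nonneg_right h1 (norm_nonneg _)
  -- Banach fixed point on the closed ball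
  set B : Set (PiLp p (fun _ : Fin n => ℂ)) := Metric.closedBall 0 R with hB
  have hmem : ∀ f : PiLp p (fun _ : Fin n => ℂ), f ∈ B ↔ ‖f‖ ≤ R := by
    intro f; rw [hB, Metric.mem_closedBall, dist_zero_right]
  have hsc : IsComplete B := Metric.isClosed_closedBall.isComplete
  have hsf : Set.MapsTo G B B := by
    intro f hf
    rw [hmem] at hf ⊢
    exact hGball f hf
  have hKnn : ((K.toNNReal : NNReal) : ℝ) = K := Real.coe_toNNReal K hK0
  have hcw : ContractingWith (Real.toNNReal K) (hsf.restrict G B B) := by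
    constructor
    · rw [← NNReal.coe_lt_coe, hKnn, NNReal.coe_one]
      exact hK1
    · refine LipschitzWith.of_dist_le_mul fun x y => ?_
      rw [Subtype.dist_eq, Subtype.dist_eq]
      simp only [Set.MapsTo.val_restrict_apply]
      rw [dist_eq_norm, dist_eq_norm, hKnn]
      exact hcontr x.1 y.1 ((hmem x.1).mp x.2) ((hmem y.1).mp y.2)
  obtain ⟨y, hyB, hyfix, -, -⟩ :=
    ContractingWith.exists_fixedPoint' hsc hsf hcw (Metric.mem_closedBall_self hR0)
      (edist_ne_top _ _)
  refine ⟨y, ⟨(hmem y).mp hyB, ?_⟩, ?_⟩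
  · rw [← hGstmt y]
    exact hyfix.symm
  · intro g ⟨hgR, hgfix⟩
    have hgG : G g = g := by rw [hGstmt g]; exact hgfix.symm
    have hd := hcontr g y hgR ((hmem y).mp hyB)
    rw [hgG, hyfix] at hd
    have hle0 : ‖g - y‖ ≤ 0 := by nlinarith [norm_nonneg (g - y)]
    exact sub_eq_zero.mp (norm_le_zero_iff.mp hle0)
end
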